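/- arXiv:1412.0130 — 9 statements merged into one kernel-verified Lean document; each statement's English description precedes it below -/
import Mathlib

section
/- For every m ≥ 4, the join K_m + \overline{K_{m-1}} of a complete graph on m vertices with an edgeless graph on m−1 vertices does not contain the square of a Hamiltonian cycle. -/
/-- `G` contains the square of a Hamiltonian cycle: there is a cyclic ordering of
all vertices such that consecutive vertices and vertices at distance two on the
cycle are adjacent in `G`. -/
def HasH2 {V : Type*} [Fintype V] (G : SimpleGraph V) : Prop :=
  ∃ e : ZMod (Fintype.card V) ≃ V,
    ∀ i : ZMod (Fintype.card V), G.Adj (e i) (e (i + 1)) ∧ G.Adj (e i) (e (i + 2))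

/-- The join of  with the edgeless graph on  vertices. -/
def joinKmEmpty (m : ℕ) : SimpleGraph (Fin m ⊕ Fin (m - 1)) :=
  SimpleGraph.fromRel (fun a _ => a.isLeft = true)

lemma joinKmEmpty_not_adj_right {m : ℕ} {a b : Fin m ⊕ Fin (m - 1)}
    (ha : a.isRight) (hb : b.isRight) : ¬ (joinKmEmpty m).Adj a b := by
  simp only [joinKmEmpty, SimpleGraph.fromRel_adj]
  rintro ⟨-, h | h⟩
  · cases a <;> simp_all
  · cases b <;> simp_all

/-- For m >= 4, the join of K_m and the empty graph on m-1 vertices has no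
Hamiltonian square. -/
theorem joinKmEmpty_no_h2 (m : ℕ) (hm : 4 ≤ m) : ¬HasH2 (joinKmEmpty m) := by
  rintro ⟨e, h⟩
  have hcard : Fintype.card (Fin m ⊕ Fin (m - 1)) = 2 * m - 1 := by
    simp only [Fintype.card_sum, Fintype.card_fin]
    omega
  haveI : NeZero (Fintype.card (Fin m ⊕ Fin (m - 1))) := ⟨by omega⟩
  -- R : positions of right vertices
  set R : Finset (ZMod (Fintype.card (Fin m ⊕ Fin (m - 1)))) := Finset.univ.filter (fun i => (e i).isRight) with hRdef
  have hRcard : R.card = m - 1 := by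
    have h1 : R.card = (Finset.univ.filter
        (fun v : Fin m ⊕ Fin (m - 1) => v.isRight)).card := by
      apply Finset.card_bij (fun i _ => e i)
      · intro i hi
        simp only [hRdef, Finset.mem_filter, Finset.mem_univ, true_and] at hi ⊢
        exact hi
      · intro i _ j _ hij
        exact e.injective hij
      · intro v hv
        refine ⟨e.symm v, ?_, by simp⟩
        simp only [hRdef, Finset.mem_filter, Finset.mem_univ, true_and] at hv ⊢
        simpa using hv
    rw [h1]
    have h2 : (Finset.univ.filter (fun v : Fin m ⊕ Fin (m - 1) => v.isRight))
        = Finset.univ.image Sum.inr := by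
      ext v
      cases v <;> simp
    rw [h2, Finset.card_image_of_injective _ Sum.inr_injective, Finset.card_univ,
      Fintype.card_fin]
  -- key: if i and i+1 are both in R, or i and i+2 both in R, contradiction
  have key1 : ∀ i : ZMod (Fintype.card (Fin m ⊕ Fin (m - 1))), i ∈ R → i + 1 ∉ R := by
    intro i hi hi1
    simp only [hRdef, Finset.mem_filter, Finset.mem_univ, true_and] at hi hi1
    exact joinKmEmpty_not_adj_right hi hi1 (h i).1
  have key2 : ∀ i : ZMod (Fintype.card (Fin m ⊕ Fin (m - 1))), i ∈ R → i + 2 ∉ R := by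
    intro i hi hi2
    simp only [hRdef, Finset.mem_filter, Finset.mem_univ, true_and] at hi hi2
    exact joinKmEmpty_not_adj_right hi hi2 (h i).2
  -- R, R+1, R+2 are pairwise disjoint
  have hinj1 : Function.Injective (fun x : ZMod (Fintype.card (Fin m ⊕ Fin (m - 1))) => x + 1) :=
    add_left_injective 1
  have hinj2 : Function.Injective (fun x : ZMod (Fintype.card (Fin m ⊕ Fin (m - 1))) => x + 2) :=
    add_left_injective 2
  set S1 := R.image (fun x => x + 1) with hS1
  set S2 := R.image (fun x => x + 2) with hS2
  have hd1 : Disjoint R S1 := by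
    rw [Finset.disjoint_left]
    intro a ha ha1
    simp only [hS1, Finset.mem_image] at ha1
    obtain ⟨b, hb, rfl⟩ := ha1
    exact key1 b hb ha
  have hd2 : Disjoint R S2 := by
    rw [Finset.disjoint_left]
    intro a ha ha2
    simp only [hS2, Finset.mem_image] at ha2
    obtain ⟨b, hb, rfl⟩ := ha2
    exact key2 b hb ha
  have hd12 : Disjoint S1 S2 := by
    rw [Finset.disjoint_left]
    intro a ha1 ha2
    simp only [hS1, hS2, Finset.mem_image] at ha1 ha2
    obtain ⟨b, hb, rfl⟩ := ha1
    obtain ⟨c, hc, hcb⟩ := ha2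
    have : c + 1 = b := by
      have : c + 2 = b + 1 := hcb
      linear_combination this
    exact key1 c hc (this ▸ hb)
  have hUnion : (R ∪ S1 ∪ S2).card = 3 * (m - 1) := by
    rw [Finset.card_union_of_disjoint (by
      rw [Finset.disjoint_union_left]; exact ⟨hd2, hd12⟩),
      Finset.card_union_of_disjoint hd1]
    rw [hS1, hS2, Finset.card_image_of_injective _ hinj1,
      Finset.card_image_of_injective _ hinj2, hRcard]
    ring
  have hle : (R ∪ S1 ∪ S2).card ≤
      Fintype.card (ZMod (Fintype.card (Fin m ⊕ Fin (m - 1)))) :=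
    Finset.card_le_univ _
  rw [ZMod.card] at hle
  omega
end

section
/- For every m ≥ 4, the graph obtained from two disjoint copies of K_m by adding a perfect matching between them does not contain the square of a Hamiltonian cycle. -/
/-- Two disjoint copies of `K_m` joined by a perfect matching `aᵢbᵢ`. -/
def twoKmMatching (m : ℕ) : SimpleGraph (Fin m ⊕ Fin m) :=
  SimpleGraph.fromRel (fun a b =>
    match a, b with
    | Sum.inl _, Sum.inl _ => True
    | Sum.inr _, Sum.inr _ => True
    | Sum.inl i, Sum.inr j => i = j
    | Sum.inr _, Sum.inl _ => False)

lemma adj_inl_inr (m : ℕ) (a b : Fin m) :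
    (twoKmMatching m).Adj (Sum.inl a) (Sum.inr b) ↔ a = b := by
  simp [twoKmMatching, SimpleGraph.fromRel_adj]

lemma adj_inr_inl (m : ℕ) (a b : Fin m) :
    (twoKmMatching m).Adj (Sum.inr a) (Sum.inl b) ↔ b = a := by
  simp [twoKmMatching, SimpleGraph.fromRel_adj]

lemma twoKmMatching_key (n m : ℕ) (hm : 4 ≤ m) (hn : n = m + m)
    (e : ZMod n ≃ Fin m ⊕ Fin m)
    (he : ∀ i : ZMod n, (twoKmMatching m).Adj (e i) (e (i + 1)) ∧
      (twoKmMatching m).Adj (e i) (e (i + 2))) : False := by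
  haveI : NeZero n := ⟨by omega⟩
  have h2 : (2 : ZMod n) ≠ 0 := by
    intro h0
    have : n ∣ 2 := by
      exact_mod_cast (ZMod.natCast_eq_zero_iff 2 n).mp (by exact_mod_cast h0)
    exact absurd (Nat.le_of_dvd (by norm_num) this) (by omega)
  have h1 : (1 : ZMod n) ≠ 0 := by
    intro h0
    have : n ∣ 1 := by
      exact_mod_cast (ZMod.natCast_eq_zero_iff 1 n).mp (by exact_mod_cast h0)
    exact absurd (Nat.le_of_dvd (by norm_num) this) (by omega)
  have hchange : ∃ i : ZMod n, (e (i + 1)).isLeft ≠ (e i).isLeft := by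
    by_contra hc
    push_neg at hc
    have hconst : ∀ k : ℕ, (e (k : ZMod n)).isLeft = (e 0).isLeft := by
      intro k
      induction k with
      | zero => simp
      | succ k ih =>
        have hcast : ((k + 1 : ℕ) : ZMod n) = (k : ZMod n) + 1 := by push_cast; ring
        rw [hcast, hc, ih]
    have hall : ∀ i : ZMod n, (e i).isLeft = (e 0).isLeft := by
      intro i
      obtain ⟨k, rfl⟩ := ZMod.natCast_zmod_surjective i
      exact hconst k
    have ht : (e (e.symm (Sum.inl (⟨0, by omega⟩ : Fin m)))).isLeft = true := by simp
    have hfa : (e (e.symm (Sum.inr (⟨0, by omega⟩ : Fin m)))).isLeft = false := by simp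
    rw [hall] at ht hfa
    rw [ht] at hfa
    exact absurd hfa (by simp)
  obtain ⟨i, hi⟩ := hchange
  have hadd : i + 1 + 1 = i + 2 := by ring
  have hA1 := (he i).1
  have hA2 := (he i).2
  have hB1 := (he (i + 1)).1
  rw [hadd] at hB1
  rcases hx : e i with a | a <;> rcases hy : e (i + 1) with b | b <;>
    rw [hx, hy] at hA1 hi <;> rw [hx] at hA2 <;> rw [hy] at hB1
  · simp at hi
  · rw [adj_inl_inr] at hA1
    subst hA1
    rcases hz : e (i + 2) with c | c <;> rw [hz] at hA2 hB1
    · rw [adj_inr_inl] at hB1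
      subst hB1
      have hii : i + 2 = i := e.injective (hz.trans hx.symm)
      have h20 : (2 : ZMod n) = 0 := by
        nth_rewrite 2 [show i = i + 0 by ring] at hii
        exact add_left_cancel hii
      exact h2 h20
    · rw [adj_inl_inr] at hA2
      subst hA2
      have hii : i + 2 = i + 1 := e.injective (hz.trans hy.symm)
      have h21 : (2 : ZMod n) = 1 := add_left_cancel hii
      exact h1 (by linear_combination h21)
  · rw [adj_inr_inl] at hA1
    subst hA1
    rcases hz : e (i + 2) with c | c <;> rw [hz] at hA2 hB1
    · rw [adj_inr_inl] at hA2
      subst hA2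
      have hii : i + 2 = i + 1 := e.injective (hz.trans hy.symm)
      have h21 : (2 : ZMod n) = 1 := add_left_cancel hii
      exact h1 (by linear_combination h21)
    · rw [adj_inl_inr] at hB1
      subst hB1
      have hii : i + 2 = i := e.injective (hz.trans hx.symm)
      have h20 : (2 : ZMod n) = 0 := by
        nth_rewrite 2 [show i = i + 0 by ring] at hii
        exact add_left_cancel hii
      exact h2 h20
  · simp at hi

/-- For m >= 4, two copies of K_m joined by a perfect matching have no
Hamiltonian square. -/
theorem twoKmMatching_no_h2 (m : ℕ) (hm : 4 ≤ m) : ¬HasH2 (twoKmMatching m) := by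
  rintro ⟨e, he⟩
  exact twoKmMatching_key _ m hm (by simp) e he
end

section
/- Let G be a connected Z₁-free graph. If some vertex v of G has degree at least 3 and lies in a triangle, then G is a complete multipartite graph. -/
/-- `F` occurs as an induced subgraph of `G`. -/
def ContainsInduced {W V : Type*} (F : SimpleGraph W) (G : SimpleGraph V) : Prop :=
  ∃ f : W ↪ V, ∀ a b, F.Adj a b ↔ G.Adj (f a) (f b)

/-- `Z₁`: the triangle with a pendant edge (claw plus an edge between two leaves). -/
def Z1Graph : SimpleGraph (Fin 4) :=
  SimpleGraph.fromRel (fun a b => (a, b) ∈ ([(0,1),(0,2),(1,2),(2,3)] : List (Fin 4 × Fin 4)))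

/-- Complete multipartite graph: the relation "equal or non-adjacent" is
transitive (its classes are the parts). -/
def IsCompleteMultipartite {V : Type*} (G : SimpleGraph V) : Prop :=
  ∀ ⦃x y z : V⦄, ¬G.Adj x y → ¬G.Adj y z → x ≠ z → ¬G.Adj x z

section Aux
variable {V : Type*} {G : SimpleGraph V}

lemma z1_L1 (hz1 : ¬ContainsInduced Z1Graph G)
    {t1 t2 t3 d : V}
    (h12 : G.Adj t1 t2) (h13 : G.Adj t1 t3) (h23 : G.Adj t2 t3)
    (hd : G.Adj d t3) (hn1 : d ≠ t1) (hn2 : d ≠ t2) :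
    G.Adj d t1 ∨ G.Adj d t2 := by
  by_contra hcon
  push_neg at hcon
  obtain ⟨hc1, hc2⟩ := hcon
  apply hz1
  have hinj : Function.Injective ![t1, t2, t3, d] := by
    intro i j hij
    fin_cases i <;> fin_cases j <;> simp_all
  have hc1' : ¬G.Adj t1 d := fun h => hc1 h.symm
  have hc2' : ¬G.Adj t2 d := fun h => hc2 h.symm
  refine ⟨⟨![t1, t2, t3, d], hinj⟩, ?_⟩
  intro a b
  fin_cases a <;> fin_cases b <;>
    simp [Z1Graph, SimpleGraph.fromRel_adj, h12, h13, h23, hd, hd.symm, h12.symm,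
      h13.symm, h23.symm, hc1, hc2, G.irrefl, h12.ne, h13.ne, h23.ne, hd.ne, hc1', hc2']

/-- the key property relative to a triangle a,b,c: u is adjacent to at least
two of the three. -/
def TwoOf (G : SimpleGraph V) (a b c u : V) : Prop :=
  (G.Adj u a ∧ G.Adj u b) ∨ (G.Adj u a ∧ G.Adj u c) ∨ (G.Adj u b ∧ G.Adj u c)

lemma twoOf_of_adj_a (hz1 : ¬ContainsInduced Z1Graph G) {a b c : V}
    (hab : G.Adj a b) (hac : G.Adj a c) (hbc : G.Adj b c)
    {u : V} (hua : G.Adj u a) : TwoOf G a b c u := by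
  by_cases hb : u = b
  · subst hb; exact Or.inr (Or.inl ⟨hua, hbc⟩)
  by_cases hc : u = c
  · subst hc; exact Or.inl ⟨hua, hbc.symm⟩
  rcases z1_L1 hz1 hbc hab.symm hac.symm hua hb hc with h | h
  · exact Or.inl ⟨hua, h⟩
  · exact Or.inr (Or.inl ⟨hua, h⟩)

lemma twoOf_of_adj_b (hz1 : ¬ContainsInduced Z1Graph G) {a b c : V}
    (hab : G.Adj a b) (hac : G.Adj a c) (hbc : G.Adj b c)
    {u : V} (hub : G.Adj u b) : TwoOf G a b c u := by
  have := twoOf_of_adj_a hz1 hab.symm hbc hac (a := b) (b := a) (c := c) hub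
  unfold TwoOf at this ⊢; tauto

lemma twoOf_of_adj_c (hz1 : ¬ContainsInduced Z1Graph G) {a b c : V}
    (hab : G.Adj a b) (hac : G.Adj a c) (hbc : G.Adj b c)
    {u : V} (huc : G.Adj u c) : TwoOf G a b c u := by
  have := twoOf_of_adj_a hz1 hac.symm hbc.symm hab (a := c) (b := a) (c := b) huc
  unfold TwoOf at this ⊢; tauto

lemma twoOf_step (hz1 : ¬ContainsInduced Z1Graph G) {a b c : V}
    (hab : G.Adj a b) (hac : G.Adj a c) (hbc : G.Adj b c)
    {u u' : V} (hu : TwoOf G a b c u) (h : G.Adj u u') : TwoOf G a b c u' := by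
  -- first get that u' is adjacent to one of a, b, c, or is one of them
  by_cases ha' : u' = a
  · subst ha'; exact Or.inr (Or.inr ⟨hab, hac⟩)
  by_cases hb' : u' = b
  · subst hb'; exact Or.inr (Or.inl ⟨hab.symm, hbc⟩)
  by_cases hc' : u' = c
  · subst hc'; exact Or.inl ⟨hac.symm, hbc.symm⟩
  rcases hu with ⟨h1, h2⟩ | ⟨h1, h2⟩ | ⟨h1, h2⟩
  · rcases z1_L1 hz1 hab h1.symm h2.symm h.symm ha' hb' with hh | hh
    · exact twoOf_of_adj_a hz1 hab hac hbc hh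
    · exact twoOf_of_adj_b hz1 hab hac hbc hh
  · rcases z1_L1 hz1 hac h1.symm h2.symm h.symm ha' hc' with hh | hh
    · exact twoOf_of_adj_a hz1 hab hac hbc hh
    · exact twoOf_of_adj_c hz1 hab hac hbc hh
  · rcases z1_L1 hz1 hbc h1.symm h2.symm h.symm hb' hc' with hh | hh
    · exact twoOf_of_adj_b hz1 hab hac hbc hh
    · exact twoOf_of_adj_c hz1 hab hac hbc hh

lemma twoOf_walk (hz1 : ¬ContainsInduced Z1Graph G) {a b c : V}
    (hab : G.Adj a b) (hac : G.Adj a c) (hbc : G.Adj b c)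
    {u u' : V} (w : G.Walk u u') (hu : TwoOf G a b c u) : TwoOf G a b c u' := by
  induction w with
  | nil => exact hu
  | cons h p ih => exact ih (twoOf_step hz1 hab hac hbc hu h)

/-- Final contradiction lemma: r adjacent to a and b of the triangle,
p~q an edge with r nonadjacent to both. -/
lemma final_contra (hz1 : ¬ContainsInduced Z1Graph G) {a b c : V}
    (hab : G.Adj a b) (hac : G.Adj a c) (hbc : G.Adj b c)
    (hall : ∀ u, TwoOf G a b c u)
    {r p q : V} (hra : G.Adj r a) (hrb : G.Adj r b)
    (hpq : G.Adj p q) (hrp : ¬G.Adj r p) (hrq : ¬G.Adj r q) : False := by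
  have hpr : p ≠ r := by rintro rfl; exact hrq hpq
  have hqr : q ≠ r := by rintro rfl; exact hrp hpq.symm
  have hpa : p ≠ a := by rintro rfl; exact hrp hra
  have hpb : p ≠ b := by rintro rfl; exact hrp hrb
  have hqa : q ≠ a := by rintro rfl; exact hrq hra
  have hqb : q ≠ b := by rintro rfl; exact hrq hrb
  have key : ∀ s : V, s ≠ r → s ≠ a → s ≠ b → ¬G.Adj r s →
      (G.Adj s a → G.Adj s b) ∧ (G.Adj s b → G.Adj s a) := by
    intro s hsr hsa hsb hrs
    constructor
    · intro hsA
      rcases z1_L1 hz1 hrb hra hab.symm hsA hsr hsb with h | h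
      · exact absurd h.symm hrs
      · exact h
    · intro hsB
      rcases z1_L1 hz1 hra hrb hab hsB hsr hsa with h | h
      · exact absurd h.symm hrs
      · exact h
  obtain ⟨kp1, kp2⟩ := key p hpr hpa hpb hrp
  obtain ⟨kq1, kq2⟩ := key q hqr hqa hqb hrq
  have hPa : G.Adj p a ∧ G.Adj p b := by
    rcases hall p with ⟨h1, h2⟩ | ⟨h1, h2⟩ | ⟨h1, h2⟩
    · exact ⟨h1, h2⟩
    · exact ⟨h1, kp1 h1⟩
    · exact ⟨kp2 h1, h1⟩
  have hQa : G.Adj q a ∧ G.Adj q b := by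
    rcases hall q with ⟨h1, h2⟩ | ⟨h1, h2⟩ | ⟨h1, h2⟩
    · exact ⟨h1, h2⟩
    · exact ⟨h1, kq1 h1⟩
    · exact ⟨kq2 h1, h1⟩
  have := z1_L1 hz1 hpq hPa.1 hQa.1 hra hpr.symm hqr.symm
  tauto

end Aux

/-- A connected Z1-free graph having a vertex of degree at least 3 lying in a
triangle is complete multipartite. -/
theorem z1free_completeMultipartite {V : Type*} (G : SimpleGraph V)
    (hconn : G.Connected) (hz1 : ¬ContainsInduced Z1Graph G)
    (v : V) (hdeg : 3 ≤ (G.neighborSet v).ncard)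
    (htri : ∃ x y, G.Adj v x ∧ G.Adj v y ∧ G.Adj x y) :
    IsCompleteMultipartite G := by
  obtain ⟨x, y, hvx, hvy, hxy⟩ := htri
  have hall : ∀ u, TwoOf G v x y u := by
    intro u
    obtain ⟨w⟩ := hconn v u
    exact twoOf_walk hz1 hvx hvy hxy w (Or.inr (Or.inr ⟨hvx, hvy⟩))
  intro p r q hpr hrq hpq_ne hpq
  have hrp : ¬G.Adj r p := fun h => hpr h.symm
  rcases hall r with ⟨h1, h2⟩ | ⟨h1, h2⟩ | ⟨h1, h2⟩
  · -- r ~ v, r ~ x : use triangle (v,x,y) with pair (v,x)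
    exact final_contra hz1 hvx hvy hxy hall h1 h2 hpq hrp hrq
  · -- r ~ v, r ~ y : pair (v,y): relabel triangle as (v,y,x)
    have hall' : ∀ u, TwoOf G v y x u := by
      intro u; have := hall u; unfold TwoOf at this ⊢; tauto
    exact final_contra hz1 hvy hvx hxy.symm hall' h1 h2 hpq hrp hrq
  · -- r ~ x, r ~ y : pair (x,y): relabel triangle as (x,y,v)
    have hall' : ∀ u, TwoOf G x y v u := by
      intro u; have := hall u; unfold TwoOf at this ⊢; tauto
    exact final_contra hz1 hxy hvx.symm hvy.symm hall' h1 h2 hpq hrp hrq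
end

section
/- Let G be a connected Z₁-free graph and v a vertex of G lying in a triangle with deg(v) ≥ 3. Then every vertex w not in the closed neighborhood N[v] satisfies N(w) = N(v). -/
instance : DecidableRel Z1Graph.Adj := fun a b =>
  decidable_of_iff' _ (SimpleGraph.fromRel_adj _ a b)

/-- No induced triangle-with-pendant in a Z₁-free graph. -/
lemma no_pendant {V : Type*} (G : SimpleGraph V) (hz1 : ¬ContainsInduced Z1Graph G)
    {a b c d : V} (hab : G.Adj a b) (hac : G.Adj a c) (hbc : G.Adj b c)
    (hcd : G.Adj c d) (hnad : ¬G.Adj a d) (hnbd : ¬G.Adj b d)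
    (hda : d ≠ a) (hdb : d ≠ b) : False := by
  apply hz1
  have hinj : Function.Injective (![a,b,c,d]) := by
    have h1 := hab.ne; have h2 := hac.ne; have h3 := hbc.ne
    have h4 := hcd.ne; have h5 := hda; have h6 := hdb
    intro i j hij
    fin_cases i <;> fin_cases j <;> simp_all
  refine ⟨⟨![a,b,c,d], hinj⟩, ?_⟩
  intro i j
  fin_cases i <;> fin_cases j <;>
    simp only [Function.Embedding.coeFn_mk, Matrix.cons_val_zero, Matrix.cons_val_one,
      Matrix.head_cons, Matrix.cons_val_two, Matrix.tail_cons, Matrix.cons_val_three,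
      Matrix.cons_val_fin_one] <;>
    first
      | exact iff_of_false (by decide) (G.irrefl)
      | exact iff_of_true (by decide) hab
      | exact iff_of_true (by decide) hab.symm
      | exact iff_of_true (by decide) hac
      | exact iff_of_true (by decide) hac.symm
      | exact iff_of_true (by decide) hbc
      | exact iff_of_true (by decide) hbc.symm
      | exact iff_of_true (by decide) hcd
      | exact iff_of_true (by decide) hcd.symm
      | exact iff_of_false (by decide) hnad
      | exact iff_of_false (by decide) (fun h => hnad h.symm)
      | exact iff_of_false (by decide) hnbd
      | exact iff_of_false (by decide) (fun h => hnbd h.symm)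

/-- In a connected Z1-free graph, if v has degree at least 3 and lies in a
triangle, then every vertex outside the closed neighborhood of  has the same
neighborhood as . -/
theorem z1free_outside_closed_neighborhood {V : Type*} (G : SimpleGraph V)
    (hconn : G.Connected) (hz1 : ¬ContainsInduced Z1Graph G)
    (v : V) (hdeg : 3 ≤ (G.neighborSet v).ncard)
    (htri : ∃ x y, G.Adj v x ∧ G.Adj v y ∧ G.Adj x y) :
    ∀ w : V, w ∉ ({v} ∪ G.neighborSet v : Set V) → G.neighborSet w = G.neighborSet v := by
  obtain ⟨x, y, hvx, hvy, hxy⟩ := htri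
  -- Subclaim A : outside vertex adjacent to both x and y sees all of N(v)
  have hA : ∀ u, u ≠ v → ¬G.Adj v u → G.Adj u x → G.Adj u y →
      ∀ t, G.Adj v t → G.Adj u t := by
    intro u hne hnu hux huy t hvt
    by_cases htx : t = x
    · exact htx ▸ hux
    by_cases hty : t = y
    · exact hty ▸ huy
    by_contra hut
    have hut' : ¬G.Adj t u := fun h => hut h.symm
    have hutne : u ≠ t := fun h => hnu (h ▸ hvt)
    -- t is adjacent to x or y
    by_cases htx' : G.Adj t x
    · -- triangle (v, t, x), pendant u
      exact no_pendant G hz1 hvt hvx htx' hux.symm hnu hut' hne hutne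
    by_cases hty' : G.Adj t y
    · exact no_pendant G hz1 hvt hvy hty' huy.symm hnu hut' hne hutne
    · -- triangle (x, y, v), pendant t
      exact no_pendant G hz1 hxy hvx.symm hvy.symm hvt (fun h => htx' h.symm) (fun h => hty' h.symm)
        htx hty
  -- Subclaim B : every neighbour of such a vertex is a neighbour of v
  have hB : ∀ u, u ≠ v → ¬G.Adj v u → G.Adj u x → G.Adj u y →
      ∀ s, G.Adj u s → G.Adj v s := by
    intro u hne hnu hux huy s hus
    by_cases hsx : s = x
    · exact hsx ▸ hvx
    by_cases hsy : s = y
    · exact hsy ▸ hvy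
    by_contra hvs
    have hsv : s ≠ v := fun h => hnu (h ▸ hus).symm
    by_cases hsx' : G.Adj s x
    · -- triangle (u, s, x), pendant v
      exact no_pendant G hz1 hus hux hsx' hvx.symm (fun h => hnu h.symm) (fun h => hvs h.symm)
        (Ne.symm hne) (Ne.symm hsv)
    by_cases hsy' : G.Adj s y
    · exact no_pendant G hz1 hus huy hsy' hvy.symm (fun h => hnu h.symm) (fun h => hvs h.symm)
        (Ne.symm hne) (Ne.symm hsv)
    · -- triangle (x, y, u), pendant s
      exact no_pendant G hz1 hxy hux.symm huy.symm hus (fun h => hsx' h.symm) (fun h => hsy' h.symm)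
        hsx hsy
  -- Step : outside vertex adjacent to some neighbour of v is adjacent to x and y
  have hstep : ∀ u s, u ≠ v → ¬G.Adj v u → G.Adj v s → G.Adj u s →
      G.Adj u x ∧ G.Adj u y := by
    intro u s hne hnu hvs hus
    have hux : G.Adj u x := by
      by_cases hsx : s = x
      · exact hsx ▸ hus
      by_contra hux
      have hune : u ≠ x := fun h => hnu (h ▸ hvx)
      by_cases hsx' : G.Adj s x
      · -- triangle (v, s, x), pendant u
        exact no_pendant G hz1 hvx hvs hsx'.symm hus.symm hnu (fun h => hux h.symm) hne hune
      by_cases hsy' : G.Adj s y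
      · -- triangle (v, s, y), pendant u gives u adj y; then triangle (v, x, y) pendant u
        have huy : G.Adj u y := by
          by_contra huy
          have huyne : u ≠ y := fun h => hnu (h ▸ hvy)
          exact no_pendant G hz1 hvy hvs hsy'.symm hus.symm hnu (fun h => huy h.symm) hne huyne
        -- triangle (v, x, y)?? use triangle (v, x, y) : pendant u adj y not x, not v
        exact no_pendant G hz1 hvx hvy hxy huy.symm hnu (fun h => hux h.symm) hne hune
      · by_cases hsy : s = y
        · -- s = y : u adj y ; triangle (v, x, y), pendant u
          exact no_pendant G hz1 hvx hvy hxy (hsy ▸ hus).symm hnu (fun h => hux h.symm)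
            hne hune
        · -- triangle (x, y, v), pendant s
          exact no_pendant G hz1 hxy hvx.symm hvy.symm hvs (fun h => hsx' h.symm) (fun h => hsy' h.symm)
            hsx hsy
    have huy : G.Adj u y := by
      by_contra huy
      have huyne : u ≠ y := fun h => hnu (h ▸ hvy)
      -- triangle (v, y, x), pendant u : u adj x, not adj v, not adj y
      exact no_pendant G hz1 hvy hvx hxy.symm hux.symm hnu (fun h => huy h.symm) hne huyne
    exact ⟨hux, huy⟩
  -- The invariant set
  set Mp : V → Prop := fun p => p = v ∨ G.Adj v p ∨ (G.Adj p x ∧ G.Adj p y) with hMp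
  have hclosed : ∀ p q, Mp p → G.Adj p q → Mp q := by
    intro p q hp hpq
    by_cases hq1 : q = v
    · exact Or.inl hq1
    by_cases hq2 : G.Adj v q
    · exact Or.inr (Or.inl hq2)
    rcases hp with rfl | hp | ⟨hpx, hpy⟩
    · exact absurd hpq hq2
    · exact Or.inr (Or.inr (hstep q p hq1 hq2 hp hpq.symm))
    · by_cases hp1 : p = v
      · exact absurd (hp1 ▸ hpq) hq2
      by_cases hp2 : G.Adj v p
      · exact Or.inr (Or.inr (hstep q p hq1 hq2 hp2 hpq.symm))
      · exact absurd (hB p hp1 hp2 hpx hpy q hpq) hq2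
  have hwalk : ∀ {p q : V}, G.Walk p q → Mp p → Mp q := by
    intro p q wpq
    induction wpq with
    | nil => exact id
    | cons h _ ih => exact fun hp => ih (hclosed _ _ hp h)
  intro w hw
  simp only [Set.mem_union, Set.mem_singleton_iff, SimpleGraph.mem_neighborSet,
    not_or] at hw
  obtain ⟨hwv, hnvw⟩ := hw
  have hMw : Mp w := (hconn.preconnected v w).elim (fun p => hwalk p (Or.inl rfl))
  rcases hMw with rfl | h | ⟨hwx, hwy⟩
  · exact absurd rfl hwv
  · exact absurd h hnvw
  · ext u
    simp only [SimpleGraph.mem_neighborSet]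
    exact ⟨fun h => hB w hwv hnvw hwx hwy u h, fun h => hA w hwv hnvw hwx hwy u h⟩
end

section
/- Let r ≥ 3 and let G be a connected graph that is Z₁-free and K_{1,r}-free and contains a vertex of degree at least r. Then G is a complete multipartite graph K_{t₁,…,t_k} with each part of size at most r−1. -/
/-- The star `K_{1,r}` with center `0` and `r` leaves. -/
def starGraph (r : ℕ) : SimpleGraph (Fin (r + 1)) :=
  SimpleGraph.fromRel (fun a _ => a = 0)

section Aux
variable {V : Type*} {G : SimpleGraph V}

lemma star_embed (r : ℕ) (c : V) (f : Fin r → V) (hinj : Function.Injective f)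
    (hadj : ∀ i, G.Adj c (f i)) (hnon : ∀ i j, i ≠ j → ¬G.Adj (f i) (f j)) :
    ContainsInduced (starGraph r) G := by
  have hcf : ∀ i, c ≠ f i := fun i => (hadj i).ne
  refine ⟨⟨Fin.cases c f, ?_⟩, ?_⟩
  · intro a b h
    induction a using Fin.cases with
    | zero =>
      induction b using Fin.cases with
      | zero => rfl
      | succ j => simp at h; exact absurd h (hcf j)
    | succ i =>
      induction b using Fin.cases with
      | zero => simp at h; exact absurd h.symm (hcf i)
      | succ j => simp at h; exact congrArg Fin.succ (hinj h)
  · intro a b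
    induction a using Fin.cases with
    | zero =>
      induction b using Fin.cases with
      | zero => simp [starGraph, SimpleGraph.fromRel_adj]
      | succ j => change _ ↔ G.Adj (Fin.cases (motive := fun _ => V) c f 0) (Fin.cases (motive := fun _ => V) c f j.succ); simp [starGraph, SimpleGraph.fromRel_adj, (Fin.succ_ne_zero j).symm, hadj j]
    | succ i =>
      induction b using Fin.cases with
      | zero => change _ ↔ G.Adj (Fin.cases (motive := fun _ => V) c f i.succ) (Fin.cases (motive := fun _ => V) c f 0); simp [starGraph, SimpleGraph.fromRel_adj, Fin.succ_ne_zero i, (hadj i).symm]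
      | succ j =>
        have : ¬ G.Adj (f i) (f j) := by
          rcases eq_or_ne i j with rfl | h
          · exact G.irrefl
          · exact hnon i j h
        change _ ↔ G.Adj (Fin.cases (motive := fun _ => V) c f i.succ) (Fin.cases (motive := fun _ => V) c f j.succ)
        simp [starGraph, SimpleGraph.fromRel_adj, Fin.succ_ne_zero, this]

lemma z1_contra (hz1 : ¬ContainsInduced Z1Graph G) {a b c d : V}
    (hab : G.Adj a b) (hac : G.Adj a c) (hbc : G.Adj b c) (hcd : G.Adj c d)
    (had : ¬G.Adj a d) (hbd : ¬G.Adj b d) (hda : d ≠ a) (hdb : d ≠ b) : False := by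
  apply hz1
  have hinj : Function.Injective ![a,b,c,d] := by
    intro i j h
    fin_cases i <;> fin_cases j <;> simp_all
  refine ⟨⟨![a,b,c,d], hinj⟩, ?_⟩
  have had' : ¬G.Adj d a := fun h => had h.symm
  have hbd' : ¬G.Adj d b := fun h => hbd h.symm
  intro i j
  fin_cases i <;> fin_cases j <;>
    simp [Z1Graph, SimpleGraph.fromRel_adj, hab, hac, hbc, hcd, had, hbd, had', hbd',
      hab.symm, hac.symm, hbc.symm, hcd.symm, G.irrefl]

lemma z1_or (hz1 : ¬ContainsInduced Z1Graph G) {a b c d : V}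
    (hab : G.Adj a b) (hac : G.Adj a c) (hbc : G.Adj b c) (hcd : G.Adj c d)
    (hda : d ≠ a) (hdb : d ≠ b) : G.Adj d a ∨ G.Adj d b := by
  by_contra h
  push_neg at h
  exact z1_contra hz1 hab hac hbc hcd (fun h' => h.1 h'.symm) (fun h' => h.2 h'.symm) hda hdb

/-- `v` lies in a triangle. -/
def InTri (G : SimpleGraph V) (v : V) : Prop :=
  ∃ a b, G.Adj v a ∧ G.Adj v b ∧ G.Adj a b

lemma inTri_adj (hz1 : ¬ContainsInduced Z1Graph G) {x w : V}
    (hx : InTri G x) (hxw : G.Adj x w) : InTri G w := by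
  obtain ⟨a, b, hxa, hxb, hab⟩ := hx
  rcases eq_or_ne w a with rfl | hwa
  · exact ⟨x, b, hxa.symm, hab, hxb⟩
  rcases eq_or_ne w b with rfl | hwb
  · exact ⟨x, a, hxb.symm, hab.symm, hxa⟩
  rcases z1_or hz1 hab hxa.symm hxb.symm hxw hwa hwb with h | h
  · exact ⟨a, x, h, hxw.symm, hxa.symm⟩
  · exact ⟨b, x, h, hxw.symm, hxb.symm⟩

lemma inTri_walk (hz1 : ¬ContainsInduced Z1Graph G) :
    ∀ {a b : V}, G.Walk a b → InTri G a → InTri G b := by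
  intro a b p
  induction p with
  | nil => exact id
  | @cons a b c h q ih => exact fun ha => ih (inTri_adj hz1 ha h)

lemma inTri_all (hz1 : ¬ContainsInduced Z1Graph G) (hconn : G.Connected)
    {v₀ : V} (h0 : InTri G v₀) : ∀ u, InTri G u := by
  intro u
  obtain ⟨p⟩ := hconn v₀ u
  exact inTri_walk hz1 p h0

lemma edge_tri (hz1 : ¬ContainsInduced Z1Graph G) (hall : ∀ u, InTri G u)
    {x z : V} (hxz : G.Adj x z) : ∃ t, G.Adj x t ∧ G.Adj z t := by
  obtain ⟨a, b, hxa, hxb, hab⟩ := hall x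
  rcases eq_or_ne z a with rfl | hza
  · exact ⟨b, hxb, hab⟩
  rcases eq_or_ne z b with rfl | hzb
  · exact ⟨a, hxa, hab.symm⟩
  rcases z1_or hz1 hab hxa.symm hxb.symm hxz hza hzb with h | h
  · exact ⟨a, hxa, h⟩
  · exact ⟨b, hxb, h⟩

lemma main_case (hz1 : ¬ContainsInduced Z1Graph G) (hall : ∀ u, InTri G u)
    {x z u w : V} (hxz : G.Adj x z) (huw : G.Adj u w) (hwx : G.Adj w x)
    (hux : ¬G.Adj u x) (huz : ¬G.Adj u z) (hnz : u ≠ z) : False := by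
  have hnx : u ≠ x := fun e => huz (e ▸ hxz)
  have hzw : z ≠ w := by rintro rfl; exact huz huw
  by_cases hwz : G.Adj w z
  · exact z1_contra hz1 hxz hwx.symm hwz.symm huw.symm
      (fun h => hux h.symm) (fun h => huz h.symm) hnx hnz
  · obtain ⟨t, hwt, hxt⟩ := edge_tri hz1 hall hwx
    have hzt : z ≠ t := by rintro rfl; exact hwz hwt
    rcases z1_or hz1 hwt hwx hxt.symm hxz hzw hzt with hzw' | hzt'
    · exact hwz hzw'.symm
    · have hut : u ≠ t := by rintro rfl; exact huz hzt'.symm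
      rcases z1_or hz1 hxt hwx.symm hwt.symm huw.symm hnx hut with hux' | hut'
      · exact hux hux'
      · exact z1_contra hz1 hxz hxt hzt' hut'.symm
          (fun h => hux h.symm) (fun h => huz h.symm) hnx hnz

lemma no_coP3_walk (hz1 : ¬ContainsInduced Z1Graph G) (hall : ∀ u, InTri G u) {z : V} :
    ∀ {u x : V} (_ : G.Walk u x), G.Adj x z → ¬G.Adj u x → ¬G.Adj u z → u ≠ z → False := by
  intro u x p
  induction p with
  | nil => intro hxz _ huz _; exact huz hxz
  | @cons a b c h q ih =>
    intro hxz hux huz hnz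
    rcases eq_or_ne b c with rfl | hbx
    · exact hux h
    rcases eq_or_ne b z with rfl | hbz
    · exact huz h
    by_cases hbxa : G.Adj b c
    · exact main_case hz1 hall hxz h hbxa hux huz hnz
    by_cases hbza : G.Adj b z
    · exact main_case hz1 hall hxz.symm h hbza huz hux (fun e => huz (by rw [e]; exact hxz))
    · exact ih hxz hbxa hbza hbz

lemma no_coP3 (hz1 : ¬ContainsInduced Z1Graph G) (hconn : G.Connected)
    (hall : ∀ u, InTri G u) {x z : V} (hxz : G.Adj x z) :
    ∀ u : V, ¬G.Adj u x → ¬G.Adj u z → u ≠ z → False := by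
  intro u hux huz hnz
  obtain ⟨p⟩ := hconn u x
  exact no_coP3_walk hz1 hall p hxz hux huz hnz

end Aux

section Aux2
variable {V : Type*} {G : SimpleGraph V}

lemma exists_fin_inj {S : Set V} {r : ℕ} (h : r ≤ S.ncard) :
    ∃ f : Fin r → V, Function.Injective f ∧ ∀ i, f i ∈ S := by
  rcases S.finite_or_infinite with hf | hf
  · obtain ⟨t, hts, hcard⟩ := Finset.exists_subset_card_eq
      (show r ≤ hf.toFinset.card by rwa [Set.ncard_eq_toFinset_card S hf] at h)
    refine ⟨fun i => (t.equivFin.symm (Fin.cast hcard.symm i) : t), ?_, ?_⟩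
    · intro i j hij
      have := t.equivFin.symm.injective (Subtype.ext hij)
      simpa [Fin.ext_iff] using this
    · intro i
      have := (t.equivFin.symm (Fin.cast hcard.symm i)).2
      have := hts this
      rwa [Set.Finite.mem_toFinset] at this
  · rw [hf.ncard] at h
    interval_cases r
    exact ⟨fun i => i.elim0, fun i => i.elim0, fun i => i.elim0⟩

end Aux2


/-- A connected `{Z₁, K_{1,r}}`-free graph (r >= 3) with a vertex of degree at
least  is complete multipartite with all parts of size at most . -/
theorem z1_star_free_completeMultipartite {V : Type*} (G : SimpleGraph V) (r : ℕ) (hr : 3 ≤ r)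
    (hconn : G.Connected)
    (hz1 : ¬ContainsInduced Z1Graph G)
    (hstar : ¬ContainsInduced (starGraph r) G)
    (hdeg : ∃ v : V, r ≤ (G.neighborSet v).ncard) :
    IsCompleteMultipartite G ∧ ∀ v : V, ({w : V | ¬G.Adj v w}).ncard ≤ r - 1 := by
  obtain ⟨v₀, hv₀⟩ := hdeg
  obtain ⟨f0, f0inj, f0mem⟩ := exists_fin_inj hv₀
  have f0adj : ∀ i, G.Adj v₀ (f0 i) := fun i => f0mem i
  have htri : InTri G v₀ := by
    have hex : ∃ i j, i ≠ j ∧ G.Adj (f0 i) (f0 j) := by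
      by_contra hc
      push_neg at hc
      exact hstar (star_embed r v₀ f0 f0inj f0adj hc)
    obtain ⟨i, j, _, hadj⟩ := hex
    exact ⟨f0 i, f0 j, f0adj i, f0adj j, hadj⟩
  have hall : ∀ u, InTri G u := inTri_all hz1 hconn htri
  have hcm : IsCompleteMultipartite G := by
    intro x y z hxy hyz hxz
    intro hadj
    exact no_coP3 hz1 hconn hall hadj y (fun h => hxy h.symm) hyz
      (fun e => hyz (by rw [e] at hxy ⊢; exact absurd hadj hxy))
  refine ⟨hcm, ?_⟩
  intro v
  by_contra hgt
  push_neg at hgt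
  have hrS : r ≤ ({w : V | ¬G.Adj v w}).ncard := by omega
  obtain ⟨f, finj, fmem⟩ := exists_fin_inj hrS
  have fnadj : ∀ i, ¬G.Adj v (f i) := fun i => fmem i
  have hu : ∃ u, G.Adj v u := by
    rcases eq_or_ne v v₀ with rfl | hne
    · exact ⟨f0 ⟨0, by omega⟩, f0adj _⟩
    · obtain ⟨p⟩ := hconn v v₀
      cases p with
      | nil => exact absurd rfl hne
      | cons h _ => exact ⟨_, h⟩
  obtain ⟨u, huv⟩ := hu
  have hadjall : ∀ i, G.Adj u (f i) := by
    intro i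
    rcases eq_or_ne (f i) v with he | he
    · rw [he]; exact huv.symm
    · by_contra hn
      exact hcm (fnadj i) (fun h => hn h.symm) huv.ne huv
  have hnon : ∀ i j, i ≠ j → ¬G.Adj (f i) (f j) := by
    intro i j hij
    have hfij : f i ≠ f j := fun e => hij (finj e)
    rcases eq_or_ne (f i) v with he | he
    · rw [he]; exact fnadj j
    · rcases eq_or_ne (f j) v with he2 | he2
      · rw [he2]; exact fun h => fnadj i h.symm
      · exact hcm (fun h => fnadj i h.symm) (fnadj j) hfij
  exact hstar (star_embed r u f finj hadjall hnon)
end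

section
/- Let r ≥ 3 and let G be a connected {K_{1,r}, Z₁}-free graph on n vertices with a vertex of degree at least r. Then G is (n−r+1)-connected. -/
/-- A graph is `k`-connected if it has more than `k` vertices and deleting any
set of fewer than `k` vertices leaves it connected. -/
def IsKConnected {V : Type*} [Fintype V] (G : SimpleGraph V) (k : ℕ) : Prop :=
  k < Fintype.card V ∧
    ∀ S : Finset V, S.card < k → (G.induce ((S : Set V)ᶜ)).Connected

namespace Z1StarAux

variable {V : Type*} {G : SimpleGraph V} {r : ℕ}

lemma zfree (hz1 : ¬ContainsInduced Z1Graph G) {a b c d : V}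
    (h1 : G.Adj a b) (h2 : G.Adj a c) (h3 : G.Adj b c) (h4 : G.Adj c d)
    (h5 : ¬G.Adj a d) (h6 : ¬G.Adj b d) : False := by
  have hda : d ≠ a := by rintro rfl; exact h6 h1.symm
  have hdb : d ≠ b := by rintro rfl; exact h5 h1
  have hdc : d ≠ c := h4.ne'
  have hinj : Function.Injective (![a, b, c, d]) := by
    intro i j hij
    fin_cases i <;> fin_cases j <;> simp_all
  apply hz1
  refine ⟨⟨![a, b, c, d], hinj⟩, ?_⟩
  intro i j
  fin_cases i <;> fin_cases j <;>
    simp [Z1Graph, SimpleGraph.fromRel_adj, G.irrefl] <;>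
    first
    | exact h1 | exact h2 | exact h3 | exact h4
    | exact h1.symm | exact h2.symm | exact h3.symm | exact h4.symm
    | exact fun h => h5 h | exact fun h => h6 h
    | exact fun h => h5 h.symm | exact fun h => h6 h.symm

lemma star_aux (hstar : ¬ContainsInduced (starGraph r) G) (z : V) (s : Finset V)
    (hcard : s.card = r) (hz : z ∉ s) (hadj : ∀ x ∈ s, G.Adj z x)
    (hind : ∀ x ∈ s, ∀ y ∈ s, x ≠ y → ¬G.Adj x y) : False := by
  set g : Fin r → V := fun i => (s.equivFin.symm (Fin.cast hcard.symm i) : V) with hg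
  have hgmem : ∀ i, g i ∈ s := fun i => (s.equivFin.symm (Fin.cast hcard.symm i)).2
  have hginj : Function.Injective g := by
    intro i j hij
    have := Subtype.ext (p := (· ∈ s)) hij
    have := s.equivFin.symm.injective this
    exact Fin.cast_injective _ this
  set f : Fin (r + 1) → V := Fin.cons z g with hf
  have hfinj : Function.Injective f := by
    intro i j hij
    induction i using Fin.cases <;> induction j using Fin.cases <;>
      simp only [hf, Fin.cons_zero, Fin.cons_succ] at hij ⊢
    · exact absurd (hij ▸ hgmem _) hz
    · exact absurd (hij ▸ hgmem _) (by simpa using hz)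
    · exact congrArg _ (hginj hij)
  apply hstar
  refine ⟨⟨f, hfinj⟩, ?_⟩
  intro i j
  induction i using Fin.cases <;> induction j using Fin.cases <;>
    simp only [Function.Embedding.coeFn_mk, hf, Fin.cons_zero, Fin.cons_succ,
      starGraph, SimpleGraph.fromRel_adj]
  · simp
  · simp [(Fin.succ_ne_zero _).symm, hadj _ (hgmem _)]
  · simp [Fin.succ_ne_zero _, (hadj _ (hgmem _)).symm]
  · rename_i a b
    constructor
    · rintro ⟨h, (h0 | h0)⟩ <;> exact absurd h0 (Fin.succ_ne_zero _)
    · intro h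
      exact absurd h (hind _ (hgmem a) _ (hgmem b) (fun e => h.ne (e ▸ rfl)))

lemma reach_ind (P : V → Prop) (step : ∀ u w, G.Adj u w → P u → P w)
    {a b : V} (h : G.Reachable a b) (ha : P a) : P b := by
  obtain ⟨p⟩ := h
  induction p with
  | nil => exact ha
  | cons h q ih => exact ih (step _ _ h ha)

lemma boundary_aux (I : Set V) {x y : V} (p : G.Walk x y) (hx : x ∈ I) (hy : y ∉ I) :
    ∃ i z, i ∈ I ∧ z ∉ I ∧ G.Adj i z := by
  induction p with
  | nil => exact absurd hx hy
  | @cons u w t h q ih =>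
    by_cases hw : w ∈ I
    · exact ih hw hy
    · exact ⟨u, w, hx, hw, h⟩

/-- every vertex lies in a triangle -/
lemma all_in_triangle (hconn : G.Connected) (hz1 : ¬ContainsInduced Z1Graph G)
    {v x0 y0 : V} (hvx : G.Adj v x0) (hvy : G.Adj v y0) (hxy : G.Adj x0 y0) (u : V) :
    ∃ x y, G.Adj u x ∧ G.Adj u y ∧ G.Adj x y := by
  have step : ∀ a w, G.Adj a w →
      (∃ x y, G.Adj a x ∧ G.Adj a y ∧ G.Adj x y) → ∃ x y, G.Adj w x ∧ G.Adj w y ∧ G.Adj x y := by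
    rintro a w haw ⟨x, y, hax, hay, hxy'⟩
    by_cases hwx : w = x
    · exact ⟨a, y, (hwx ▸ hax).symm, hwx ▸ hxy', hay⟩
    by_cases hwy : w = y
    · exact ⟨a, x, (hwy ▸ hay).symm, hwy ▸ hxy'.symm, hax⟩
    by_cases h1 : G.Adj w x
    · exact ⟨a, x, haw.symm, h1, hax⟩
    by_cases h2 : G.Adj w y
    · exact ⟨a, y, haw.symm, h2, hay⟩
    · exact absurd (zfree hz1 hxy' (hax.symm) (hay.symm) haw
        (fun h => h1 h.symm) (fun h => h2 h.symm)) id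
  exact reach_ind _ step (hconn v u) ⟨x0, y0, hvx, hvy, hxy⟩
end Z1StarAux

namespace Z1StarAux
variable {V : Type*} {G : SimpleGraph V} {r : ℕ}

/-- every edge lies in a triangle, given every vertex does -/
lemma edge_in_triangle (hz1 : ¬ContainsInduced Z1Graph G)
    (htri : ∀ u : V, ∃ x y, G.Adj u x ∧ G.Adj u y ∧ G.Adj x y)
    {a c : V} (hac : G.Adj a c) : ∃ e, G.Adj a e ∧ G.Adj c e := by
  obtain ⟨x, y, hax, hay, hxy⟩ := htri a
  by_cases hcx : c = x
  · exact ⟨y, hay, hcx ▸ hxy⟩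
  by_cases hcy : c = y
  · exact ⟨x, hax, hcy ▸ hxy.symm⟩
  by_cases h1 : G.Adj c x
  · exact ⟨x, hax, h1⟩
  by_cases h2 : G.Adj c y
  · exact ⟨y, hay, h2⟩
  exact absurd (zfree hz1 hxy hax.symm hay.symm hac
    (fun h => h1 h.symm) (fun h => h2 h.symm)) id

lemma key (hconn : G.Connected) (hz1 : ¬ContainsInduced Z1Graph G)
    (htri : ∀ u : V, ∃ x y, G.Adj u x ∧ G.Adj u y ∧ G.Adj x y) :
    ∀ n, ∀ a b c : V, G.Adj a c → ¬G.Adj b a → ¬G.Adj b c → b ≠ a → b ≠ c →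
      G.dist b a ≤ n → G.dist b a ≤ G.dist b c → False := by
  intro n
  induction n with
  | zero =>
    intro a b c hac hba hbc hne1 hne2 hn _
    exact hne1 (hconn.dist_eq_zero_iff.mp (Nat.le_zero.mp hn))
  | succ n ih =>
    intro a b c hac hba hbc hne1 hne2 hn hmin
    -- extend edge a c to triangle a c e
    obtain ⟨e, hae, hce⟩ := edge_in_triangle hz1 htri hac
    have hbe : ¬G.Adj b e := fun h =>
      zfree hz1 hac hae hce h.symm (fun h' => hba h'.symm) (fun h' => hbc h'.symm)
    have hbne : b ≠ e := by rintro rfl; exact hba hae.symm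
    -- penultimate vertex on shortest walk a → b
    set d := G.dist b a with hd
    have hdpos : d ≠ 0 := by
      intro h0; exact hne1 (hconn.dist_eq_zero_iff.mp h0)
    obtain ⟨p, hp⟩ := hconn.exists_walk_length_eq_dist a b
    have hplen : p.length = d := by rw [hp, SimpleGraph.dist_comm]
    cases p with
    | nil => exact hdpos (by simpa using hplen.symm)
    | @cons _ w _ haw q =>
      have hq : q.length = d - 1 := by
        simp only [SimpleGraph.Walk.length_cons] at hplen; omega
      have hbw : G.dist b w ≤ d - 1 := by
        have := SimpleGraph.dist_le q.reverse
        rwa [SimpleGraph.Walk.length_reverse, hq] at this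
      have hwb : w ≠ b := by rintro rfl; exact hba haw.symm
      have hwc : w ≠ c := by
        rintro rfl
        have : d ≤ d - 1 := le_trans hmin hbw
        omega
      -- find t ∈ {c, e} with triangle a t w
      have ⟨t, hat, htw, hbt, hbnet⟩ :
          ∃ t, G.Adj a t ∧ G.Adj t w ∧ ¬G.Adj b t ∧ b ≠ t := by
        by_cases hwe : w = e
        · exact ⟨c, hac, hwe ▸ hce, hbc, hne2⟩
        by_cases h1 : G.Adj w c
        · exact ⟨c, hac, h1.symm, hbc, hne2⟩
        by_cases h2 : G.Adj w e
        · exact ⟨e, hae, h2.symm, hbe, hbne⟩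
        exact absurd (zfree hz1 hce hac.symm hae.symm haw
          (fun h => h1 h.symm) (fun h => h2 h.symm)) id
      by_cases hbw' : G.Adj b w
      · exact zfree hz1 hat haw htw hbw'.symm (fun h => hba h.symm) (fun h => hbt h.symm)
      · have hbnew : b ≠ w := Ne.symm hwb
        exact ih w b a haw.symm hbw' hba hbnew hne1 (by omega) (le_trans hbw (by omega))

/-- no vertex is nonadjacent to both endpoints of an edge -/
lemma htrans (hconn : G.Connected) (hz1 : ¬ContainsInduced Z1Graph G)
    (htri : ∀ u : V, ∃ x y, G.Adj u x ∧ G.Adj u y ∧ G.Adj x y)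
    {a b c : V} (hac : G.Adj a c) (hba : ¬G.Adj b a) (hbc : ¬G.Adj b c)
    (hne1 : b ≠ a) (hne2 : b ≠ c) : False := by
  rcases le_total (G.dist b a) (G.dist b c) with h | h
  · exact key hconn hz1 htri (G.dist b a) a b c hac hba hbc hne1 hne2 le_rfl h
  · exact key hconn hz1 htri (G.dist b c) c b a hac.symm hbc hba hne2 hne1 le_rfl h

/-- independence bound -/
lemma indep_bound [Fintype V] [DecidableEq V]
    (hconn : G.Connected) (hz1 : ¬ContainsInduced Z1Graph G)
    (hstar : ¬ContainsInduced (starGraph r) G)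
    (htri : ∀ u : V, ∃ x y, G.Adj u x ∧ G.Adj u y ∧ G.Adj x y)
    (hr : 0 < r)
    (t : Finset V) (hind : ∀ x ∈ t, ∀ y ∈ t, x ≠ y → ¬G.Adj x y) : t.card < r := by
  by_contra hge
  push_neg at hge
  obtain ⟨t', ht'sub, ht'card⟩ := Finset.exists_subset_card_eq hge
  have hind' : ∀ x ∈ t', ∀ y ∈ t', x ≠ y → ¬G.Adj x y :=
    fun x hx y hy => hind x (ht'sub hx) y (ht'sub hy)
  have ht'ne : t'.Nonempty := by
    rw [← Finset.card_pos, ht'card]; omega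
  obtain ⟨i0, hi0⟩ := ht'ne
  -- some vertex outside t'
  have hout : ∃ u, u ∉ t' := by
    obtain ⟨x, y, hix, hiy, hxy⟩ := htri i0
    by_cases hx : x ∈ t'
    · by_cases hy : y ∈ t'
      · exact absurd hxy (hind' x hx y hy hxy.ne)
      · exact ⟨y, hy⟩
    · exact ⟨x, hx⟩
  obtain ⟨u, hu⟩ := hout
  obtain ⟨p⟩ := hconn i0 u
  obtain ⟨i, z, hiI, hzI, hiz⟩ := boundary_aux (↑t' : Set V) p (by exact hi0) (by exact hu)
  have hzadj : ∀ j ∈ t', G.Adj z j := by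
    intro j hj
    by_cases hji : j = i
    · exact hji ▸ hiz.symm
    by_cases hjz : G.Adj j z
    · exact hjz.symm
    have hjz' : j ≠ z := fun h => hzI (h ▸ hj)
    exact absurd (htrans hconn hz1 htri hiz (fun h => hind' j hj i hiI hji h)
      hjz hji hjz') id
  exact star_aux hstar z t' ht'card hzI hzadj hind'

end Z1StarAux

open Z1StarAux

/-- A connected `{K_{1,r}, Z₁}`-free graph (r >= 3) on n vertices with a vertex
of degree at least  is -connected. -/
theorem z1_star_free_connectivity {V : Type*} [Fintype V] (G : SimpleGraph V) (r : ℕ)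
    (hr : 3 ≤ r)
    (hconn : G.Connected)
    (hz1 : ¬ContainsInduced Z1Graph G)
    (hstar : ¬ContainsInduced (starGraph r) G)
    (hdeg : ∃ v : V, r ≤ (G.neighborSet v).ncard) :
    IsKConnected G (Fintype.card V - r + 1) := by
  classical
  obtain ⟨v, hv⟩ := hdeg
  have hv' : r ≤ (G.neighborFinset v).card := by
    rwa [Set.ncard_eq_toFinset_card'] at hv
  -- a triangle through v
  obtain ⟨s, hssub, hscard⟩ := Finset.exists_subset_card_eq hv'
  have hsadj : ∀ x ∈ s, G.Adj v x := fun x hx =>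
    (SimpleGraph.mem_neighborFinset G v x).mp (hssub hx)
  have htri0 : ∃ x y, G.Adj v x ∧ G.Adj v y ∧ G.Adj x y := by
    by_contra hno
    push_neg at hno
    exact star_aux hstar v s hscard
      (fun h => G.irrefl (hsadj v h))
      hsadj
      (fun x hx y hy hne hadj => hno x y (hsadj x hx) (hsadj y hy) hadj)
  obtain ⟨x0, y0, hvx, hvy, hxy⟩ := htri0
  have htri : ∀ u : V, ∃ x y, G.Adj u x ∧ G.Adj u y ∧ G.Adj x y :=
    all_in_triangle hconn hz1 hvx hvy hxy
  set n := Fintype.card V with hn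
  have hnr : r + 1 ≤ n := by
    have h1 : G.neighborFinset v ⊆ Finset.univ.erase v := by
      intro x hx
      rw [Finset.mem_erase]
      exact ⟨fun h => G.irrefl (h ▸ (SimpleGraph.mem_neighborFinset G v x).mp hx),
        Finset.mem_univ x⟩
    have h2 := Finset.card_le_card h1
    rw [Finset.card_erase_of_mem (Finset.mem_univ v), Finset.card_univ] at h2
    omega
  constructor
  · omega
  intro S hS
  have hTcard : r ≤ Sᶜ.card := by
    rw [Finset.card_compl]
    omega
  rw [SimpleGraph.connected_iff]
  constructor
  · -- preconnected
    rintro ⟨x, hx⟩ ⟨y, hy⟩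
    by_cases hxyeq : x = y
    · subst hxyeq; rfl
    have hedge : ∀ (a b : V) (ha : a ∈ ((S : Set V)ᶜ)) (hb : b ∈ ((S : Set V)ᶜ)),
        G.Adj a b → (G.induce ((S : Set V)ᶜ)).Adj ⟨a, ha⟩ ⟨b, hb⟩ := by
      intro a b ha hb hab
      simp [hab]
    by_cases hadj : G.Adj x y
    · exact (hedge x y hx hy hadj).reachable
    -- the part of x
    set P : Finset V := Finset.univ.filter (fun z => z = x ∨ ¬G.Adj z x) with hP
    have hPind : ∀ z₁ ∈ P, ∀ z₂ ∈ P, z₁ ≠ z₂ → ¬G.Adj z₁ z₂ := by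
      intro z₁ hz₁ z₂ hz₂ hne hadj'
      rw [hP, Finset.mem_filter] at hz₁ hz₂
      by_cases e1 : z₁ = x
      · subst e1
        rcases hz₂.2 with e2 | h2
        · exact hne e2.symm
        · exact h2 hadj'.symm
      · have h1 : ¬G.Adj z₁ x := hz₁.2.resolve_left e1
        by_cases e2 : z₂ = x
        · subst e2; exact h1 hadj'
        · have h2 : ¬G.Adj z₂ x := hz₂.2.resolve_left e2
          exact htrans hconn hz1 htri hadj' (fun h => h1 h.symm) (fun h => h2 h.symm)
            (Ne.symm e1) (Ne.symm e2)
    have hPcard : P.card < r := indep_bound hconn hz1 hstar htri (by omega) P hPind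
    have hzex : ∃ z, z ∈ Sᶜ ∧ z ∉ P := by
      by_contra hno
      push_neg at hno
      have : Sᶜ ⊆ P := fun z hz => hno z hz
      have := Finset.card_le_card this
      omega
    obtain ⟨z, hzT, hzP⟩ := hzex
    rw [hP, Finset.mem_filter] at hzP
    push_neg at hzP
    have hzx : G.Adj z x := (hzP (Finset.mem_univ z)).2
    have hzne : z ≠ x := (hzP (Finset.mem_univ z)).1
    have hzy : G.Adj z y := by
      by_contra hzy
      have hyz : y ≠ z := by rintro rfl; exact hadj hzx.symm
      exact htrans hconn hz1 htri hzx.symm (fun h => hadj h.symm) (fun h => hzy h.symm)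
        (Ne.symm hxyeq) hyz
    have hzT' : z ∈ ((S : Set V)ᶜ) := by
      simpa using hzT
    exact ((hedge x z hx hzT' hzx.symm).reachable).trans (hedge z y hzT' hy hzy).reachable
  · -- nonempty
    have : Sᶜ.Nonempty := Finset.card_pos.mp (by omega)
    obtain ⟨z, hz⟩ := this
    exact ⟨⟨z, by simpa using hz⟩⟩
end

section
/- Every 4-connected graph on at least 9 vertices that is both K_{1,4}-free and Z₁-free contains the square of a Hamiltonian cycle. -/
lemma flatten_len_of_all3 {V : Type*} (B : List (List V)) (h : ∀ l ∈ B, l.length = 3) :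
    B.flatten.length = 3 * B.length := by
  induction B with
  | nil => simp
  | cons l B ih =>
    simp only [List.flatten_cons, List.length_append, List.length_cons]
    rw [h l (by simp), ih (fun l' hl' => h l' (by simp [hl']))]
    ring

lemma blocks_key {V : Type*} (f : V → V) (B : List (List V))
    (h3 : ∀ l ∈ B, l.length ≤ 3)
    (hsame : ∀ l ∈ B, ∀ x ∈ l, ∀ y ∈ l, f x = f y)
    (hdiff : B.Pairwise (fun a b => ∀ x ∈ a, ∀ y ∈ b, f x ≠ f y))
    (hsort : B.Pairwise (fun a b => a.length ≤ b.length)) :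
    ∀ p q (hpq : p < q) (hq : q < B.flatten.length)
      (_ : f (B.flatten[p]'(by omega)) = f (B.flatten[q]'hq)),
      q - p ≤ 2 ∧ (q - p = 2 → (B.flatten.length - p) % 3 = 0) := by
  induction B with
  | nil => intro p q h1 h2; simp at h2
  | cons l B ih =>
    intro p q hpq hq heq
    have hflat : (l :: B).flatten = l ++ B.flatten := List.flatten_cons
    rcases lt_or_ge q l.length with hql | hql
    · -- both in head block
      have hl3 : l.length ≤ 3 := h3 l (by simp)
      refine ⟨by omega, fun h2 => ?_⟩
      have hp0 : p = 0 := by omega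
      have hlen3 : l.length = 3 := by omega
      have hall3 : ∀ l' ∈ B, l'.length = 3 := by
        intro l' hl'
        have h1 := (List.pairwise_cons.mp hsort).1 l' hl'
        have h2 := h3 l' (by simp [hl'])
        omega
      have := flatten_len_of_all3 B hall3
      simp only [hflat, List.length_append]
      omega
    · rcases lt_or_ge p l.length with hpl | hpl
      · -- cross: contradiction
        exfalso
        have hx : (l :: B).flatten[p]'(by omega) = l[p]'hpl := by
          simp only [hflat]; exact List.getElem_append_left hpl
        have hy : (l :: B).flatten[q]'hq = B.flatten[q - l.length]'(by
            simp only [hflat, List.length_append] at hq; omega) := by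
          simp only [hflat]; exact List.getElem_append_right hql
        have hymem : B.flatten[q - l.length]'(by
            simp only [hflat, List.length_append] at hq; omega) ∈ B.flatten :=
          List.getElem_mem _
        obtain ⟨l', hl', hyl'⟩ := List.mem_flatten.mp hymem
        have := (List.pairwise_cons.mp hdiff).1 l' hl' (l[p]'hpl) (List.getElem_mem _)
          _ hyl'
        rw [hx, hy] at heq
        exact this heq
      · -- both in tail
        have hq' : q - l.length < B.flatten.length := by
          simp only [hflat, List.length_append] at hq; omega
        have hx : (l :: B).flatten[p]'(by omega) = B.flatten[p - l.length]'(by omega) := by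
          simp only [hflat]; exact List.getElem_append_right hpl
        have hy : (l :: B).flatten[q]'hq = B.flatten[q - l.length]'hq' := by
          simp only [hflat]; exact List.getElem_append_right hql
        have := ih (fun l' h => h3 l' (by simp [h])) (fun l' h => hsame l' (by simp [h]))
          (List.pairwise_cons.mp hdiff).2 (List.pairwise_cons.mp hsort).2
          (p - l.length) (q - l.length) (by omega) hq' (by rw [← hx, ← hy]; exact heq)
        simp only [hflat, List.length_append]
        omega

lemma tau_gap (n m pp qq d r s : ℕ) (hm : n = 3*m) (h3 : 3 ≤ m) (hpp : pp < n)
    (hd : d = 1 ∨ d = 2) (hq : qq = (pp+d) % n)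
    (hr : r = pp/3 + pp%3*m) (hs : s = qq/3 + qq%3*m) :
    (r < s ∧ (2 < s - r ∨ (s - r = 2 ∧ (n - r) % 3 ≠ 0))) ∨
    (s < r ∧ (2 < r - s ∨ (r - s = 2 ∧ (n - s) % 3 ≠ 0))) := by
  have hqv : (pp + d < n ∧ qq = pp + d) ∨ (n ≤ pp + d ∧ qq = pp + d - n) := by
    rcases lt_or_ge (pp + d) n with h | h
    · exact Or.inl ⟨h, by rw [hq, Nat.mod_eq_of_lt h]⟩
    · exact Or.inr ⟨h, by rw [hq, Nat.mod_eq_sub_mod h, Nat.mod_eq_of_lt (by omega)]⟩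
  clear hq
  rcases (show pp % 3 = 0 ∨ pp % 3 = 1 ∨ pp % 3 = 2 by omega) with h1 | h1 | h1 <;>
  rcases (show qq % 3 = 0 ∨ qq % 3 = 1 ∨ qq % 3 = 2 by omega) with h2 | h2 | h2 <;>
  rw [h1] at hr <;> rw [h2] at hs <;> rcases hd with rfl | rfl <;>
  rcases hqv with ⟨hw, hv⟩ | ⟨hw, hv⟩ <;> omega

lemma exists_cyc {V : Type*} [Fintype V] [DecidableEq V] (f : V → V)
    (hcard : 9 ≤ Fintype.card V)
    (hfib : ∀ t : V, (Finset.univ.filter (fun v => f v = t)).card ≤ 3) :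
    ∃ e : ZMod (Fintype.card V) ≃ V,
      ∀ i, f (e i) ≠ f (e (i + 1)) ∧ f (e i) ≠ f (e (i + 2)) := by
  classical
  set n := Fintype.card V with hn
  haveI : NeZero n := ⟨by omega⟩
  set cls : List (List V) :=
    (Finset.univ.image f).toList.map (fun t => (Finset.univ.filter (fun v => f v = t)).toList)
    with hcls
  have hcls_mem : ∀ l ∈ cls, ∃ t ∈ Finset.univ.image f,
      l = (Finset.univ.filter (fun v => f v = t)).toList := by
    intro l hl
    rw [hcls] at hl
    obtain ⟨t, ht, rfl⟩ := List.mem_map.mp hl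
    exact ⟨t, (Finset.mem_toList).mp ht, rfl⟩
  have hcls_len : ∀ l ∈ cls, 1 ≤ l.length ∧ l.length ≤ 3 := by
    intro l hl
    obtain ⟨t, ht, rfl⟩ := hcls_mem l hl
    rw [Finset.length_toList]
    constructor
    · obtain ⟨v, _, hv⟩ := Finset.mem_image.mp ht
      have : v ∈ Finset.univ.filter (fun v => f v = t) := by simp [hv]
      exact Finset.card_pos.mpr ⟨v, this⟩
    · exact hfib t
  have hcls_same : ∀ l ∈ cls, ∀ x ∈ l, ∀ y ∈ l, f x = f y := by
    intro l hl x hx y hy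
    obtain ⟨t, ht, rfl⟩ := hcls_mem l hl
    rw [Finset.mem_toList, Finset.mem_filter] at hx hy
    rw [hx.2, hy.2]
  have hcls_diff : cls.Pairwise (fun a b => ∀ x ∈ a, ∀ y ∈ b, f x ≠ f y) := by
    rw [hcls, List.pairwise_map]
    refine List.Pairwise.imp_of_mem ?_ ((Finset.univ.image f).nodup_toList)
    intro s t hs ht hst x hx y hy
    rw [Finset.mem_toList, Finset.mem_filter] at hx hy
    rw [hx.2, hy.2]; exact hst
  set p1 : List V → Bool := fun l => l.length == 1 with hp1
  set p2 : List V → Bool := fun l => l.length == 2 with hp2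
  set B : List (List V) :=
    cls.filter p1 ++ (cls.filter p2 ++ cls.filter (fun l => l.length == 3)) with hB
  have hperm : B.Perm cls := by
    have h1 := List.filter_append_perm p1 cls
    have h2 := List.filter_append_perm p2 (cls.filter fun x => !p1 x)
    have e2 : (cls.filter fun x => !p1 x).filter p2 = cls.filter p2 := by
      rw [List.filter_filter]
      apply List.filter_congr
      intro l hl
      have := hcls_len l hl
      by_cases h : l.length = 2 <;> simp [hp1, hp2, h] <;> omega
    have e3 : (cls.filter fun x => !p1 x).filter (fun x => !p2 x) =
        cls.filter (fun l => l.length == 3) := by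
      rw [List.filter_filter]
      apply List.filter_congr
      intro l hl
      have := hcls_len l hl
      rcases (show l.length = 1 ∨ l.length = 2 ∨ l.length = 3 by omega) with h | h | h <;>
        simp [hp1, hp2, h]
    rw [e2, e3] at h2
    exact (h2.append_left _).trans h1
  have hBmem : ∀ l ∈ B, l ∈ cls := fun l hl => hperm.mem_iff.mp hl
  have hBdiff : B.Pairwise (fun a b => ∀ x ∈ a, ∀ y ∈ b, f x ≠ f y) :=
    (hperm.pairwise_iff (fun h x hx y hy he => h y hy x hx he.symm)).mpr hcls_diff
  have hlen1 : ∀ l ∈ cls.filter p1, l.length = 1 := by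
    intro l hl; have := List.of_mem_filter hl; simpa [hp1] using this
  have hlen2 : ∀ l ∈ cls.filter p2, l.length = 2 := by
    intro l hl; have := List.of_mem_filter hl; simpa [hp2] using this
  have hlen3 : ∀ l ∈ cls.filter (fun l => l.length == 3), l.length = 3 := by
    intro l hl; have := List.of_mem_filter hl; simpa using this
  have hBsort : B.Pairwise (fun a b => a.length ≤ b.length) := by
    rw [hB, List.pairwise_append]
    refine ⟨List.pairwise_of_forall_mem_list (fun a ha b hb => by
        rw [hlen1 a ha, hlen1 b hb]), ?_, ?_⟩
    · rw [List.pairwise_append]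
      refine ⟨List.pairwise_of_forall_mem_list (fun a ha b hb => by
          rw [hlen2 a ha, hlen2 b hb]),
        List.pairwise_of_forall_mem_list (fun a ha b hb => by
          rw [hlen3 a ha, hlen3 b hb]), ?_⟩
      intro a ha b hb; rw [hlen2 a ha, hlen3 b hb]; omega
    · intro a ha b hb
      rcases List.mem_append.mp hb with hb | hb
      · rw [hlen1 a ha, hlen2 b hb]; omega
      · rw [hlen1 a ha, hlen3 b hb]; omega
  have hSnodup : B.flatten.Nodup := by
    rw [List.nodup_flatten]
    constructor
    · intro l hl
      obtain ⟨t, _, rfl⟩ := hcls_mem l (hBmem l hl)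
      exact Finset.nodup_toList _
    · refine (hperm.pairwise_iff (by intro x y h a ha hb; exact h hb ha)).mpr ?_
      exact hcls_diff.imp (fun h x hx hy => h x hx x hy rfl)
  have hSmemall : ∀ v, v ∈ B.flatten := by
    intro v
    have ht : f v ∈ Finset.univ.image f := Finset.mem_image_of_mem f (Finset.mem_univ v)
    have hlcls : (Finset.univ.filter (fun w => f w = f v)).toList ∈ cls := by
      rw [hcls]
      exact List.mem_map_of_mem (Finset.mem_toList.mpr ht)
    refine List.mem_flatten.mpr ⟨_, hperm.mem_iff.mpr hlcls, ?_⟩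
    rw [Finset.mem_toList, Finset.mem_filter]
    exact ⟨Finset.mem_univ v, rfl⟩
  have hSlen : B.flatten.length = n := by
    have h1 : B.flatten.toFinset = Finset.univ :=
      Finset.eq_univ_iff_forall.mpr (fun v => List.mem_toFinset.mpr (hSmemall v))
    have h2 := List.toFinset_card_of_nodup hSnodup
    rw [h1] at h2
    rw [← h2, hn, Finset.card_univ]
  have hgap : ∀ p q (hp : p < B.flatten.length) (hq : q < B.flatten.length), p < q →
      f (B.flatten[p]'hp) = f (B.flatten[q]'hq) →
      q - p ≤ 2 ∧ (q - p = 2 → (n - p) % 3 = 0) := by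
    intro p q hp hq hpq heq
    have := blocks_key f B (fun l hl => (hcls_len l (hBmem l hl)).2)
      (fun l hl => hcls_same l (hBmem l hl)) hBdiff hBsort p q hpq hq heq
    rw [hSlen] at this
    exact this
  -- the equivalences
  set e0 : ZMod n ≃ Fin n :=
    ⟨fun a => ⟨a.val, ZMod.val_lt a⟩, fun p => ((p : ℕ) : ZMod n),
      fun a => ZMod.natCast_zmod_val a, fun p => Fin.ext (ZMod.val_cast_of_lt p.2)⟩ with he0
  set EV : Fin n ≃ V := (finCongr hSlen.symm).trans
    (Equiv.ofBijective B.flatten.get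
      ((Fintype.bijective_iff_injective_and_card _).mpr
        ⟨List.nodup_iff_injective_get.mp hSnodup, by simp [hSlen, hn]⟩)) with hEVdef
  have hEV : ∀ (p : Fin n), EV p = B.flatten[(p : ℕ)]'(by rw [hSlen]; exact p.2) := by
    intro p; rfl
  by_cases h3n : n % 3 = 0
  · -- n divisible by 3 : column construction
    set m := n / 3 with hmdef
    have hm : n = 3 * m := by omega
    have hm3 : 3 ≤ m := by omega
    have hbd : ∀ p : Fin n, (p : ℕ)/3 + (p : ℕ)%3 * m < n := by
      intro p
      have h2 := p.2
      rcases (show (p:ℕ) % 3 = 0 ∨ (p:ℕ)%3 = 1 ∨ (p:ℕ)%3 = 2 by omega) with h|h|h <;>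
        rw [h] <;> omega
    set τ : Fin n → Fin n := fun p => ⟨(p : ℕ)/3 + (p : ℕ)%3 * m, hbd p⟩ with hτ
    have τinj : Function.Injective τ := by
      intro a b h
      rw [hτ, Fin.mk.injEq] at h
      have ha := a.2
      have hb := b.2
      apply Fin.ext
      rcases (show (a:ℕ) % 3 = 0 ∨ (a:ℕ)%3 = 1 ∨ (a:ℕ)%3 = 2 by omega) with h1|h1|h1 <;>
      rcases (show (b:ℕ) % 3 = 0 ∨ (b:ℕ)%3 = 1 ∨ (b:ℕ)%3 = 2 by omega) with h2|h2|h2 <;>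
        rw [h1, h2] at h <;> omega
    set τe : Fin n ≃ Fin n :=
      Equiv.ofBijective τ ((Fintype.bijective_iff_injective_and_card τ).mpr ⟨τinj, rfl⟩) with hτe
    refine ⟨(e0.trans τe).trans EV, fun i => ?_⟩
    have hstep : ∀ (x : ZMod n) (d : ℕ), d = 1 ∨ d = 2 →
        f (EV (τe (e0 x))) = f (EV (τe (e0 (x + (d : ℕ))))) → False := by
      intro x d hd heq
      have hdn : d < n := by omega
      have hval : (x + (d : ℕ)).val = (x.val + d) % n := by
        rw [ZMod.val_add, ZMod.val_natCast, Nat.mod_eq_of_lt hdn]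
      set pp := x.val with hppdef
      set qq := (x + (d : ℕ)).val with hqqdef
      have hpp : pp < n := ZMod.val_lt x
      have hqq : qq < n := ZMod.val_lt _
      have hr1 : ((τe (e0 x)) : ℕ) = pp/3 + pp%3 * m := rfl
      have hr2 : ((τe (e0 (x + (d : ℕ)))) : ℕ) = qq/3 + qq%3 * m := rfl
      rw [hEV, hEV] at heq
      have := tau_gap n m pp qq d (pp/3 + pp%3 * m) (qq/3 + qq%3 * m) hm hm3 hpp hd hval
        rfl rfl
      rcases this with ⟨hlt, hbad⟩ | ⟨hlt, hbad⟩
      · have hg := hgap _ _ (by rw [hSlen]; exact (τe (e0 x)).2.trans_le (le_of_eq rfl))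
          (by rw [hSlen]; exact (τe (e0 (x + (d:ℕ)))).2) (by rw [hr1, hr2]; exact hlt) ?hh
        · rw [hr1, hr2] at hg
          rcases hbad with h | ⟨h1, h2⟩
          · omega
          · exact h2 (hg.2 h1)
        · exact heq
      · have hg := hgap _ _ (by rw [hSlen]; exact (τe (e0 (x + (d:ℕ)))).2)
          (by rw [hSlen]; exact (τe (e0 x)).2) (by rw [hr1, hr2]; exact hlt) heq.symm
        rw [hr1, hr2] at hg
        rcases hbad with h | ⟨h1, h2⟩
        · omega
        · exact h2 (hg.2 h1)
    constructor
    · intro hcon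
      refine hstep i 1 (Or.inl rfl) ?_
      simpa using hcon
    · intro hcon
      refine hstep i 2 (Or.inr rfl) ?_
      simpa using hcon
  · -- n coprime to 3 : multiply by 3
    have hcop : Nat.Coprime 3 n :=
      (Nat.Prime.coprime_iff_not_dvd Nat.prime_three).mpr (fun hdvd => h3n (Nat.mod_eq_zero_of_dvd hdvd))
    set u : (ZMod n)ˣ := ZMod.unitOfCoprime 3 hcop with hu
    have hucoe : ((u : ZMod n)) = ((3:ℕ) : ZMod n) := ZMod.coe_unitOfCoprime 3 hcop
    have hstep : ∀ (x : ZMod n) (d : ℕ), d = 3 ∨ d = 6 →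
        f (EV (e0 x)) = f (EV (e0 (x + (d:ℕ)))) → False := by
      intro x d hd heq
      have hd3 : 3 ≤ d ∧ d ≤ 6 := by rcases hd with rfl | rfl <;> omega
      have hdn : d < n := by omega
      have hval : (x + (d:ℕ)).val = (x.val + d) % n := by
        rw [ZMod.val_add, ZMod.val_natCast, Nat.mod_eq_of_lt hdn]
      rw [hEV, hEV] at heq
      have hxv : x.val < n := ZMod.val_lt x
      rcases lt_or_ge (x.val + d) n with hw | hw
      · have hq : (x.val + d) % n = x.val + d := Nat.mod_eq_of_lt hw
        have hg := hgap x.val ((x + (d:ℕ)).val) (by rw [hSlen]; exact hxv)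
          (by rw [hSlen]; exact ZMod.val_lt _) (by omega) heq
        omega
      · have hq : (x.val + d) % n = x.val + d - n := by
          rw [Nat.mod_eq_sub_mod hw, Nat.mod_eq_of_lt (by omega)]
        have hg := hgap ((x + (d:ℕ)).val) x.val (by rw [hSlen]; exact ZMod.val_lt _)
          (by rw [hSlen]; exact hxv) (by omega) heq.symm
        omega
    refine ⟨((Units.mulLeft u).trans e0).trans EV, fun i => ?_⟩
    constructor
    · intro hcon
      have h1 : (↑u : ZMod n) * (i+1) = ↑u * i + ((3:ℕ) : ZMod n) := by
        rw [hucoe]; push_cast; ring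
      have hcon2 : f (EV (e0 ((u : ZMod n) * i))) = f (EV (e0 ((u : ZMod n) * (i+1)))) := hcon
      rw [h1] at hcon2
      exact hstep _ 3 (Or.inl rfl) hcon2
    · intro hcon
      have h1 : (↑u : ZMod n) * (i+2) = ↑u * i + ((6:ℕ) : ZMod n) := by
        rw [hucoe]; push_cast; ring
      have hcon2 : f (EV (e0 ((u : ZMod n) * i))) = f (EV (e0 ((u : ZMod n) * (i+2)))) := hcon
      rw [h1] at hcon2
      exact hstep _ 6 (Or.inr rfl) hcon2

lemma z1_free_helper {V : Type*} {G : SimpleGraph V} (hz1 : ¬ContainsInduced Z1Graph G)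
    (a b c d : V) (hab : G.Adj a b) (hac : G.Adj a c) (hbc : G.Adj b c) (hcd : G.Adj c d)
    (had : ¬G.Adj a d) (hbd : ¬G.Adj b d) (hda : d ≠ a) (hdb : d ≠ b) : False := by
  apply hz1
  have nab := hab.ne
  have nac := hac.ne
  have nbc := hbc.ne
  have ncd := hcd.ne
  refine ⟨⟨![a,b,c,d], ?_⟩, ?_⟩
  · intro i j hij
    fin_cases i <;> fin_cases j <;> simp_all
  · intro i j
    fin_cases i <;> fin_cases j <;>
      simp [Z1Graph, SimpleGraph.fromRel_adj] <;>
      first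
        | exact hab | exact hac | exact hbc | exact hcd
        | exact hab.symm | exact hac.symm | exact hbc.symm | exact hcd.symm
        | exact had | exact hbd
        | exact fun h => had h.symm | exact fun h => hbd h.symm
        | simp_all

lemma star_free_helper {V : Type*} {G : SimpleGraph V}
    (hstar : ¬ContainsInduced (starGraph 4) G)
    (v x1 x2 x3 x4 : V)
    (h1 : G.Adj v x1) (h2 : G.Adj v x2) (h3 : G.Adj v x3) (h4 : G.Adj v x4)
    (n12 : x1 ≠ x2) (n13 : x1 ≠ x3) (n14 : x1 ≠ x4)
    (n23 : x2 ≠ x3) (n24 : x2 ≠ x4) (n34 : x3 ≠ x4)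
    (a12 : ¬G.Adj x1 x2) (a13 : ¬G.Adj x1 x3) (a14 : ¬G.Adj x1 x4)
    (a23 : ¬G.Adj x2 x3) (a24 : ¬G.Adj x2 x4) (a34 : ¬G.Adj x3 x4) : False := by
  apply hstar
  have e1 := h1.ne
  have e2 := h2.ne
  have e3 := h3.ne
  have e4 := h4.ne
  refine ⟨⟨![v,x1,x2,x3,x4], ?_⟩, ?_⟩
  · intro i j hij
    fin_cases i <;> fin_cases j <;> simp_all
  · intro i j
    fin_cases i <;> fin_cases j <;>
      simp [starGraph, SimpleGraph.fromRel_adj] <;>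
      first
        | exact h1 | exact h2 | exact h3 | exact h4
        | exact h1.symm | exact h2.symm | exact h3.symm | exact h4.symm
        | exact a12 | exact a13 | exact a14 | exact a23 | exact a24 | exact a34
        | exact fun h => a12 h.symm | exact fun h => a13 h.symm | exact fun h => a14 h.symm
        | exact fun h => a23 h.symm | exact fun h => a24 h.symm | exact fun h => a34 h.symm
        | simp_all

/-- Every 4-connected `{K_{1,4}, Z₁}`-free graph on at least 9 vertices contains
the square of a Hamiltonian cycle. -/
theorem fourConnected_k14_z1_free_h2 {V : Type*} [Fintype V] (G : SimpleGraph V)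
    (hcard : 9 ≤ Fintype.card V)
    (h4 : IsKConnected G 4)
    (hstar : ¬ContainsInduced (starGraph 4) G)
    (hz1 : ¬ContainsInduced Z1Graph G) :
    HasH2 G := by
  classical
  obtain ⟨hcard4, hconn'⟩ := h4
  have hconn : G.Connected := by
    have h := hconn' ∅ (by simp)
    have he : ((↑(∅ : Finset V) : Set V))ᶜ = Set.univ := by simp
    rw [he] at h
    exact (SimpleGraph.induceUnivIso G).connected_iff.mp h
  -- minimum degree ≥ 4
  have hdeg : ∀ v : V, ∃ s : Finset V, s ⊆ G.neighborFinset v ∧ s.card = 4 := by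
    intro v
    refine Finset.exists_subset_card_eq ?_
    by_contra hlt
    push_neg at hlt
    have hc := hconn' (G.neighborFinset v) hlt
    have hvmem : v ∈ ((G.neighborFinset v : Set V))ᶜ := by simp
    obtain ⟨w, hw⟩ : ∃ w, w ∉ insert v (G.neighborFinset v) := by
      by_contra hcon
      push_neg at hcon
      have hsub : (Finset.univ : Finset V) ⊆ insert v (G.neighborFinset v) :=
        fun x _ => hcon x
      have hle := Finset.card_le_card hsub
      have hle2 := Finset.card_insert_le v (G.neighborFinset v)
      rw [Finset.card_univ] at hle
      omega
    rw [Finset.mem_insert] at hw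
    push_neg at hw
    have hwmem : w ∈ ((G.neighborFinset v : Set V))ᶜ := by simpa using hw.2
    obtain ⟨p⟩ := hc.preconnected ⟨v, hvmem⟩ ⟨w, hwmem⟩
    cases p with
    | nil => exact hw.1 rfl
    | cons hadj p' =>
      rename_i u
      have : G.Adj v u.1 := hadj
      have hu := u.2
      rw [Set.mem_compl_iff, Finset.mem_coe, SimpleGraph.mem_neighborFinset] at hu
      exact hu this
  -- a triangle exists
  have hnV : Nonempty V := Fintype.card_pos_iff.mp (by omega)
  have htri : ∃ x y z : V, G.Adj x y ∧ G.Adj x z ∧ G.Adj y z := by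
    by_contra hno
    push_neg at hno
    obtain ⟨v⟩ := hnV
    obtain ⟨s, hs, hs4⟩ := hdeg v
    obtain ⟨x1, hx1⟩ : s.Nonempty := Finset.card_pos.mp (by omega)
    have hs3 : (s.erase x1).card = 3 := by rw [Finset.card_erase_of_mem hx1, hs4]
    rw [Finset.card_eq_three] at hs3
    obtain ⟨x2, x3, x4, n23, n24, n34, hs3eq⟩ := hs3
    have hx2 : x2 ∈ s.erase x1 := by rw [hs3eq]; simp
    have hx3 : x3 ∈ s.erase x1 := by rw [hs3eq]; simp
    have hx4 : x4 ∈ s.erase x1 := by rw [hs3eq]; simp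
    rw [Finset.mem_erase] at hx2 hx3 hx4
    have hadj : ∀ x ∈ s, G.Adj v x := by
      intro x hx
      have := hs hx
      rwa [SimpleGraph.mem_neighborFinset] at this
    exact star_free_helper hstar v x1 x2 x3 x4 (hadj _ hx1) (hadj _ hx2.2) (hadj _ hx3.2)
      (hadj _ hx4.2) (Ne.symm hx2.1) (Ne.symm hx3.1) (Ne.symm hx4.1) n23 n24 n34
      (hno _ _ _ (hadj _ hx1) (hadj _ hx2.2)) (hno _ _ _ (hadj _ hx1) (hadj _ hx3.2))
      (hno _ _ _ (hadj _ hx1) (hadj _ hx4.2)) (hno _ _ _ (hadj _ hx2.2) (hadj _ hx3.2))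
      (hno _ _ _ (hadj _ hx2.2) (hadj _ hx4.2)) (hno _ _ _ (hadj _ hx3.2) (hadj _ hx4.2))
  -- a maximum clique
  obtain ⟨T, hTc, hTmax⟩ : ∃ T : Finset V, G.IsClique ↑T ∧
      ∀ s : Finset V, G.IsClique ↑s → s.card ≤ T.card := by
    obtain ⟨T, hT, hTm⟩ := Finset.exists_max_image
      (Finset.univ.filter (fun s : Finset V => G.IsClique ↑s)) Finset.card
      ⟨∅, by simp [SimpleGraph.isClique_empty]⟩
    exact ⟨T, (Finset.mem_filter.mp hT).2,
      fun s hs => hTm s (Finset.mem_filter.mpr ⟨Finset.mem_univ s, hs⟩)⟩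
  have hTadj : ∀ a ∈ T, ∀ b ∈ T, a ≠ b → G.Adj a b := fun a ha b hb hne => hTc ha hb hne
  have hT3 : 3 ≤ T.card := by
    obtain ⟨x, y, z, hxy, hxz, hyz⟩ := htri
    have hcl : G.IsClique ↑({x, y, z} : Finset V) := by
      intro a ha b hb hne
      simp at ha hb
      rcases ha with rfl | rfl | rfl <;> rcases hb with rfl | rfl | rfl <;>
        first
          | exact absurd rfl hne
          | assumption
          | exact hxy.symm | exact hxz.symm | exact hyz.symm
    have hc3 : ({x, y, z} : Finset V).card = 3 :=
      Finset.card_eq_three.mpr ⟨x, y, z, hxy.ne, hxz.ne, hyz.ne, rfl⟩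
    have := hTmax _ hcl
    omega
  -- every vertex outside T misses some vertex of T
  have hmiss : ∀ v, v ∉ T → ∃ t ∈ T, ¬G.Adj v t := by
    intro v hv
    by_contra h
    push_neg at h
    have hcl : G.IsClique ↑(insert v T) := by
      rw [Finset.coe_insert]
      exact SimpleGraph.isClique_insert.mpr ⟨hTc, fun b hb _ => h b hb⟩
    have := hTmax _ hcl
    rw [Finset.card_insert_of_notMem hv] at this
    omega
  -- every vertex outside T has a neighbor in T
  have hnbrT : ∀ v, v ∉ T → ∃ t ∈ T, G.Adj v t := by
    have hA : ∀ u w (p : G.Walk u w), (u ∈ T ∨ ∃ t ∈ T, G.Adj u t) →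
        (w ∈ T ∨ ∃ t ∈ T, G.Adj w t) := by
      intro u w p
      induction p with
      | nil => exact id
      | cons hadj p ih =>
        rename_i u' v' w'
        intro hu
        apply ih
        by_cases hvT : v' ∈ T
        · exact Or.inl hvT
        right
        by_cases huT : u' ∈ T
        · exact ⟨u', huT, hadj.symm⟩
        rcases hu with hu | ⟨t0, ht0, hadj0⟩
        · exact absurd hu huT
        by_contra hnone
        push_neg at hnone
        have honly : ∀ t1 ∈ T, ∀ t2 ∈ T, ¬G.Adj u' t1 → ¬G.Adj u' t2 → t1 = t2 := by
          intro t1 ht1 t2 ht2 hn1 hn2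
          by_contra hne
          have hne10 : t1 ≠ t0 := fun h => hn1 (h ▸ hadj0)
          have hne20 : t2 ≠ t0 := fun h => hn2 (h ▸ hadj0)
          exact z1_free_helper hz1 t1 t2 t0 u' (hTadj _ ht1 _ ht2 hne)
            (hTadj _ ht1 _ ht0 hne10) (hTadj _ ht2 _ ht0 hne20) hadj0.symm
            (fun h => hn1 h.symm) (fun h => hn2 h.symm)
            (fun h => huT (h ▸ ht1)) (fun h => huT (h ▸ ht2))
        have h2 : 1 < (T.filter (fun t => G.Adj u' t)).card := by
          by_contra hle
          push_neg at hle
          have hsplit := Finset.card_filter_add_card_filter_not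
            (s := T) (p := fun t => G.Adj u' t)
          have hle2 : (T.filter (fun t => ¬G.Adj u' t)).card ≤ 1 :=
            Finset.card_le_one.mpr (fun a ha b hb => by
              rw [Finset.mem_filter] at ha hb
              exact honly a ha.1 b hb.1 ha.2 hb.2)
          omega
        obtain ⟨a', ha', b', hb', hab'⟩ := Finset.one_lt_card.mp h2
        rw [Finset.mem_filter] at ha' hb'
        exact z1_free_helper hz1 a' b' u' v' (hTadj _ ha'.1 _ hb'.1 hab') ha'.2.symm hb'.2.symm
          hadj (fun h => hnone a' ha'.1 h.symm) (fun h => hnone b' hb'.1 h.symm)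
          (fun h => hvT (h ▸ ha'.1)) (fun h => hvT (h ▸ hb'.1))
    intro v hv
    obtain ⟨t1, ht1⟩ : T.Nonempty := Finset.card_pos.mp (by omega)
    obtain ⟨p⟩ := hconn.preconnected t1 v
    rcases hA t1 v p (Or.inl ht1) with h | h
    · exact absurd h hv
    · exact h
  have huniq : ∀ v, v ∉ T → ∀ t1 ∈ T, ∀ t2 ∈ T, ¬G.Adj v t1 → ¬G.Adj v t2 → t1 = t2 := by
    intro v hv t1 ht1 t2 ht2 hn1 hn2
    obtain ⟨t0, ht0, hadj0⟩ := hnbrT v hv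
    by_contra hne
    have hne10 : t1 ≠ t0 := fun h => hn1 (h ▸ hadj0)
    have hne20 : t2 ≠ t0 := fun h => hn2 (h ▸ hadj0)
    exact z1_free_helper hz1 t1 t2 t0 v (hTadj _ ht1 _ ht2 hne)
      (hTadj _ ht1 _ ht0 hne10) (hTadj _ ht2 _ ht0 hne20) hadj0.symm
      (fun h => hn1 h.symm) (fun h => hn2 h.symm)
      (fun h => hv (h ▸ ht1)) (fun h => hv (h ▸ ht2))
  -- the missing-vertex function
  obtain ⟨f, hf⟩ : ∃ f : V → V, ∀ v, (v ∈ T → f v = v) ∧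
      (v ∉ T → f v ∈ T ∧ ¬G.Adj v (f v) ∧ ∀ t ∈ T, ¬G.Adj v t → t = f v) := by
    refine ⟨fun v => if hv : v ∈ T then v else Classical.choose (hmiss v hv), fun v => ⟨?_, ?_⟩⟩
    · intro hv; simp [hv]
    · intro hv
      simp only [hv, dite_false]
      obtain ⟨h1, h2⟩ := Classical.choose_spec (hmiss v hv)
      exact ⟨h1, h2, fun t ht hnt => huniq v hv t ht _ h1 hnt h2⟩
  have hfT : ∀ v, f v ∈ T := by
    intro v
    by_cases hv : v ∈ T
    · rw [(hf v).1 hv]; exact hv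
    · exact ((hf v).2 hv).1
  have hfall : ∀ v, v ∉ T → ∀ t ∈ T, t ≠ f v → G.Adj v t := by
    intro v hv t ht hne
    by_contra hnadj
    exact hne (((hf v).2 hv).2.2 t ht hnadj)
  -- adjacency characterization
  have hadj_iff : ∀ x y, G.Adj x y ↔ x ≠ y ∧ f x ≠ f y := by
    intro x y
    constructor
    · intro hxy
      refine ⟨hxy.ne, ?_⟩
      intro hfe
      by_cases hxT : x ∈ T <;> by_cases hyT : y ∈ T
      · rw [(hf x).1 hxT, (hf y).1 hyT] at hfe
        exact hxy.ne hfe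
      · have h1 := ((hf y).2 hyT).2.1
        rw [← hfe, (hf x).1 hxT] at h1
        exact h1 hxy.symm
      · have h1 := ((hf x).2 hxT).2.1
        rw [hfe, (hf y).1 hyT] at h1
        exact h1 hxy
      · -- both outside with same missing vertex: bigger clique
        have htT : f x ∈ T := hfT x
        have hxe : x ∉ insert y ((T.erase (f x)) : Finset V) := by
          simp only [Finset.mem_insert, Finset.mem_erase]
          push_neg
          exact ⟨hxy.ne, fun _ => hxT⟩
        have hye : y ∉ (T.erase (f x)) := fun h => hyT (Finset.mem_erase.mp h).2
        have hcl : G.IsClique ↑(insert x (insert y (T.erase (f x)))) := by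
          rw [Finset.coe_insert, Finset.coe_insert]
          refine SimpleGraph.isClique_insert.mpr ⟨SimpleGraph.isClique_insert.mpr
            ⟨hTc.subset (by rw [Finset.coe_erase]; exact Set.diff_subset), ?_⟩, ?_⟩
          · intro b hb _
            rw [Finset.mem_coe, Finset.mem_erase] at hb
            exact hfall y hyT b hb.2 (by rw [← hfe]; exact hb.1)
          · intro b hb _
            rcases Set.mem_insert_iff.mp hb with rfl | hb
            · exact hxy
            · rw [Finset.mem_coe, Finset.mem_erase] at hb
              exact hfall x hxT b hb.2 hb.1
        have hle := hTmax _ hcl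
        rw [Finset.card_insert_of_notMem hxe, Finset.card_insert_of_notMem hye,
          Finset.card_erase_of_mem htT] at hle
        omega
    · rintro ⟨hne, hfne⟩
      by_contra hnadj
      by_cases hxT : x ∈ T <;> by_cases hyT : y ∈ T
      · exact hnadj (hTadj _ hxT _ hyT hne)
      · have h1 := ((hf y).2 hyT).2.2 x hxT (fun h => hnadj h.symm)
        exact hfne (by rw [(hf x).1 hxT, ← h1])
      · have h1 := ((hf x).2 hxT).2.2 y hyT hnadj
        exact hfne (by rw [(hf y).1 hyT, ← h1])
      · -- both outside, different missing vertices: Z1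
        have hsT : f x ∈ T := hfT x
        have htT : f y ∈ T := hfT y
        obtain ⟨a, ha⟩ : ((T.erase (f x)).erase (f y)).Nonempty := by
          rw [← Finset.card_pos, Finset.card_erase_of_mem
            (Finset.mem_erase.mpr ⟨fun h => hfne h.symm, htT⟩),
            Finset.card_erase_of_mem hsT]
          omega
        rw [Finset.mem_erase, Finset.mem_erase] at ha
        obtain ⟨hat, has, haT⟩ := ha
        exact z1_free_helper hz1 x (f y) a y
          (hfall x hxT (f y) htT (fun h => hfne h.symm))
          (hfall x hxT a haT has)
          (hTadj _ htT _ haT (fun h => hat h.symm))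
          ((hfall y hyT a haT hat).symm)
          hnadj
          (fun h => ((hf y).2 hyT).2.1 h.symm)
          hne.symm
          (fun h => hyT (h ▸ htT))
  -- fibers of f have at most 3 elements
  have hfib : ∀ t : V, (Finset.univ.filter (fun v => f v = t)).card ≤ 3 := by
    intro t
    by_contra hgt
    push_neg at hgt
    obtain ⟨s, hssub, hs4⟩ := Finset.exists_subset_card_eq hgt
    obtain ⟨x1, hx1⟩ : s.Nonempty := Finset.card_pos.mp (by omega)
    have hs3 : (s.erase x1).card = 3 := by rw [Finset.card_erase_of_mem hx1, hs4]
    rw [Finset.card_eq_three] at hs3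
    obtain ⟨x2, x3, x4, n23, n24, n34, hs3eq⟩ := hs3
    have hx2 : x2 ∈ s.erase x1 := by rw [hs3eq]; simp
    have hx3 : x3 ∈ s.erase x1 := by rw [hs3eq]; simp
    have hx4 : x4 ∈ s.erase x1 := by rw [hs3eq]; simp
    rw [Finset.mem_erase] at hx2 hx3 hx4
    have hmem : ∀ x ∈ s, f x = t := by
      intro x hx
      exact (Finset.mem_filter.mp (hssub hx)).2
    have htT : t ∈ T := by
      rw [← hmem x1 hx1]; exact hfT x1
    obtain ⟨sT, hsTmem, hsTne⟩ := Finset.exists_mem_ne (by omega : 1 < T.card) t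
    have hsadj : ∀ x ∈ s, G.Adj sT x := by
      intro x hx
      rw [hadj_iff]
      have hfx : f sT ≠ f x := by
        rw [(hf sT).1 hsTmem, hmem x hx]; exact hsTne
      exact ⟨fun h => hfx (by rw [h]), hfx⟩
    have hsnadj : ∀ x ∈ s, ∀ y ∈ s, ¬ G.Adj x y := by
      intro x hx y hy
      rw [hadj_iff]
      push_neg
      intro _
      rw [hmem x hx, hmem y hy]
    exact star_free_helper hstar sT x1 x2 x3 x4 (hsadj _ hx1) (hsadj _ hx2.2)
      (hsadj _ hx3.2) (hsadj _ hx4.2) (Ne.symm hx2.1) (Ne.symm hx3.1) (Ne.symm hx4.1)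
      n23 n24 n34
      (hsnadj _ hx1 _ hx2.2) (hsnadj _ hx1 _ hx3.2) (hsnadj _ hx1 _ hx4.2)
      (hsnadj _ hx2.2 _ hx3.2) (hsnadj _ hx2.2 _ hx4.2) (hsnadj _ hx3.2 _ hx4.2)
  -- conclude with the combinatorial arrangement
  obtain ⟨e, he⟩ := exists_cyc f hcard hfib
  refine ⟨e, fun i => ?_⟩
  obtain ⟨h1, h2⟩ := he i
  constructor
  · rw [hadj_iff]
    exact ⟨fun h => h1 (by rw [h]), h1⟩
  · rw [hadj_iff]
    exact ⟨fun h => h2 (by rw [h]), h2⟩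
end

section
/- The complete tripartite graph K_{2,3,3} is 4-connected, K_{1,4}-free, Z₁-free, but contains no square of a Hamiltonian cycle. -/
/-- The complete tripartite graph K_{2,3,3}. -/
def k233 : SimpleGraph (Σ i : Fin 3, Fin (![2, 3, 3] i)) :=
  SimpleGraph.completeMultipartiteGraph (fun i : Fin 3 => Fin (![2, 3, 3] i))

abbrev Vt := (Σ i : Fin 3, Fin (![2, 3, 3] i))

lemma k233_adj (u v : Vt) : k233.Adj u v ↔ u.1 ≠ v.1 := Iff.rfl

lemma fiber_card_le : ∀ i : Fin 3, (Finset.univ.filter (fun v : Vt => v.1 = i)).card ≤ 3 := by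
  decide

lemma cofiber_card_ge : ∀ i : Fin 3, 5 ≤ (Finset.univ.filter (fun v : Vt => v.1 ≠ i)).card := by
  decide

lemma card_Vt : Fintype.card Vt = 8 := by decide

instance inst_s15 : DecidableRel Z1Graph.Adj := fun a b => by
  unfold Z1Graph; rw [SimpleGraph.fromRel_adj]; infer_instance

lemma tri_count : ∀ a b c : Fin 3, a ≠ b → a ≠ c → b ≠ c →
    ((if a = 0 then 1 else 0) + (if b = 0 then 1 else 0) + (if c = 0 then 1 else 0) : ℕ) = 1 := by
  decide

/-- K_{2,3,3} is 4-connected, K_{1,4}-free and Z1-free, but has no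
Hamiltonian square. -/
theorem k233_properties :
    IsKConnected k233 4 ∧ ¬ContainsInduced (starGraph 4) k233 ∧
      ¬ContainsInduced Z1Graph k233 ∧ ¬HasH2 k233 := by
  refine ⟨⟨by rw [card_Vt]; norm_num, ?_⟩, ?_, ?_, ?_⟩
  · -- connectivity
    intro S hS
    rw [SimpleGraph.connected_iff]
    constructor
    · -- preconnected
      rintro ⟨u, hu⟩ ⟨v, hv⟩
      simp only [Set.mem_compl_iff, Finset.mem_coe] at hu hv
      by_cases huv : u.1 = v.1
      · by_cases heq : u = v
        · subst heq; exact SimpleGraph.Reachable.refl _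
        · -- find a common neighbor
          have hT : (((Finset.univ.filter (fun w : Vt => w.1 ≠ u.1)) \ S)).Nonempty := by
            rw [← Finset.card_pos]
            have h1 := cofiber_card_ge u.1
            have h2 := Finset.le_card_sdiff S (Finset.univ.filter (fun w : Vt => w.1 ≠ u.1))
            omega
          obtain ⟨w, hw⟩ := hT
          rw [Finset.mem_sdiff, Finset.mem_filter] at hw
          have hwS : w ∈ ((S : Set Vt)ᶜ) := by
            simp only [Set.mem_compl_iff, Finset.mem_coe]; exact hw.2
          refine SimpleGraph.Reachable.trans
            (SimpleGraph.Adj.reachable (v := ⟨w, hwS⟩) ?_)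
            (SimpleGraph.Adj.reachable ?_)
          · exact fun h => hw.1.2 h.symm
          · exact fun h => hw.1.2 (h.trans huv.symm)
      · exact SimpleGraph.Adj.reachable huv
    · -- nonempty
      have : (Sᶜ : Finset Vt).Nonempty := by
        rw [← Finset.card_pos, Finset.card_compl, card_Vt]; omega
      obtain ⟨v, hv⟩ := this
      rw [Finset.mem_compl] at hv
      exact ⟨⟨v, by simp [hv]⟩⟩
  · -- K_{1,4}-free
    rintro ⟨f, hf⟩
    have same : ∀ a b : Fin 5, a ≠ b → a ≠ 0 → b ≠ 0 → (f a).1 = (f b).1 := by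
      intro a b hab ha hb
      have : ¬ (starGraph 4).Adj a b := by
        simp [starGraph, SimpleGraph.fromRel_adj, ha, hb]
      rw [hf] at this
      exact not_not.mp this
    set i := (f 1).1 with hi
    have hsub : (Finset.image f {1, 2, 3, 4}) ⊆
        Finset.univ.filter (fun v : Vt => v.1 = i) := by
      intro v hv
      simp only [Finset.mem_image, Finset.mem_insert, Finset.mem_singleton] at hv
      obtain ⟨a, ha, rfl⟩ := hv
      simp only [Finset.mem_filter, Finset.mem_univ, true_and]
      rcases ha with rfl | rfl | rfl | rfl
      · rfl
      · exact (same 1 2 (by decide) (by decide) (by decide)).symm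
      · exact (same 1 3 (by decide) (by decide) (by decide)).symm
      · exact (same 1 4 (by decide) (by decide) (by decide)).symm
    have hcard : (Finset.image f ({1, 2, 3, 4} : Finset (Fin 5))).card = 4 := by
      rw [Finset.card_image_of_injective _ f.injective]
      decide
    have := Finset.card_le_card hsub
    rw [hcard] at this
    exact absurd (this.trans (fiber_card_le i)) (by norm_num)
  · -- Z1-free
    rintro ⟨f, hf⟩
    have h01 : k233.Adj (f 0) (f 1) := (hf 0 1).mp (by decide)
    have h03 : (f 0).1 = (f 3).1 := by
      have : ¬ k233.Adj (f 0) (f 3) := by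
        rw [← hf]; decide
      exact not_not.mp this
    have h13 : (f 1).1 = (f 3).1 := by
      have : ¬ k233.Adj (f 1) (f 3) := by
        rw [← hf]; decide
      exact not_not.mp this
    exact h01 (h03.trans h13.symm)
  · -- no Hamiltonian square
    rintro ⟨e, he⟩
    haveI : NeZero (Fintype.card Vt) := ⟨by rw [card_Vt]; norm_num⟩
    have key : ∀ i : ZMod (Fintype.card Vt),
        (e i).1 ≠ (e (i + 1)).1 ∧ (e i).1 ≠ (e (i + 2)).1 := fun i =>
      ⟨(he i).1, (he i).2⟩
    have key2 : ∀ i : ZMod (Fintype.card Vt), (e (i + 1)).1 ≠ (e (i + 2)).1 := by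
      intro i
      have := (key (i + 1)).1
      rwa [add_assoc] at this
    set A : Finset (ZMod (Fintype.card Vt)) :=
      Finset.univ.filter (fun i => (e i).1 = 0) with hA
    have hAcard : A.card = 2 := by
      have hbij : A.card = (Finset.univ.filter (fun v : Vt => v.1 = 0)).card := by
        apply Finset.card_bij' (fun a _ => e a) (fun b _ => e.symm b)
        · intro a ha
          simp only [hA, Finset.mem_filter, Finset.mem_univ, true_and] at ha ⊢
          exact ha
        · intro b hb
          simp only [hA, Finset.mem_filter, Finset.mem_univ, true_and,
            Equiv.apply_symm_apply] at hb ⊢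
          exact hb
        · intro a _; exact e.symm_apply_apply a
        · intro b _; exact e.apply_symm_apply b
      rw [hbij]
      decide
    have window : ∀ i : ZMod (Fintype.card Vt),
        ((if (e i).1 = 0 then 1 else 0) + (if (e (i+1)).1 = 0 then 1 else 0) +
          (if (e (i+2)).1 = 0 then 1 else 0) : ℕ) = 1 := by
      intro i
      exact tri_count _ _ _ (key i).1 (key i).2 (key2 i)
    have shift : ∀ c : ZMod (Fintype.card Vt),
        (∑ i : ZMod (Fintype.card Vt), (if (e (i + c)).1 = 0 then 1 else 0) : ℕ) = A.card := by
      intro c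
      rw [hA, Finset.card_filter]
      exact Fintype.sum_equiv (Equiv.addRight c) _ _ (fun i => rfl)
    have sumA : (∑ i : ZMod (Fintype.card Vt), (if (e i).1 = 0 then 1 else 0) : ℕ) = A.card := by
      rw [hA, Finset.card_filter]
    have total : (∑ i : ZMod (Fintype.card Vt),
        ((if (e i).1 = 0 then 1 else 0) + (if (e (i+1)).1 = 0 then 1 else 0) +
          (if (e (i+2)).1 = 0 then 1 else 0) : ℕ)) = 3 * A.card := by
      rw [Finset.sum_add_distrib, Finset.sum_add_distrib, sumA, shift 1, shift 2]
      ring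
    have total2 : (∑ i : ZMod (Fintype.card Vt),
        ((if (e i).1 = 0 then 1 else 0) + (if (e (i+1)).1 = 0 then 1 else 0) +
          (if (e (i+2)).1 = 0 then 1 else 0) : ℕ)) = 8 := by
      rw [Finset.sum_congr rfl (fun i _ => window i), Finset.sum_const, Finset.card_univ,
        ZMod.card, smul_eq_mul, mul_one, card_Vt]
    rw [total2, hAcard] at total
    norm_num at total
end

section
/- If a complete multipartite graph with all parts of size at most 2 (i.e., a complete graph minus a matching) is 4-connected, then it contains the square of a Hamiltonian cycle. -/

theorem key_aux {α : Type*} (f : α → α) (hf : Function.Involutive f)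
    (LA LS : List α) (a : ℕ) (hau : a ≤ LS.length)
    (hS : ∀ v ∈ LS, f v = v)
    (j : ℕ) (hj : j < (LA ++ (LS.take a ++ (LA.map f ++ LS.drop a))).length) :
    ∃ (p : ℕ) (hp : p < (LA ++ (LS.take a ++ (LA.map f ++ LS.drop a))).length),
      f ((LA ++ (LS.take a ++ (LA.map f ++ LS.drop a)))[j]) =
        (LA ++ (LS.take a ++ (LA.map f ++ LS.drop a)))[p]'hp ∧
      ((j < LA.length → p = j + LA.length + a) ∧
      (LA.length ≤ j → j < LA.length + a → p = j) ∧
      (LA.length + a ≤ j → j < 2*LA.length + a → p = j - (LA.length + a)) ∧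
      (2*LA.length + a ≤ j → p = j)) := by
  classical
  set m := LA.length with hm
  set u := LS.length with hu
  have hidx : ∀ (l : List α) (i j : ℕ) (h : i < l.length) (e : i = j),
      l[i]'h = l[j]'(e ▸ h) := by
    intro l i j h e; subst e; rfl
  have htake : (LS.take a).length = a := by simp [min_eq_left hau]; exact hau
  have hmap : (LA.map f).length = m := by simp; rfl
  have hdrop : (LS.drop a).length = u - a := by simp; rfl
  have hlen : (LA ++ (LS.take a ++ (LA.map f ++ LS.drop a))).length = 2*m + u := by
    simp only [List.length_append, htake, hmap, hdrop]
    omega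
  rcases Nat.lt_or_ge j m with h1 | h1
  · -- first block
    refine ⟨j + m + a, by omega, ?_, ?_⟩
    · have e1 : (LA ++ (LS.take a ++ (LA.map f ++ LS.drop a)))[j] = LA[j]'h1 :=
        List.getElem_append_left h1
      have e2 : (LA ++ (LS.take a ++ (LA.map f ++ LS.drop a)))[j + m + a]'(by omega)
          = (LS.take a ++ (LA.map f ++ LS.drop a))[j + m + a - m]'(by
            simp only [List.length_append, htake, hmap, hdrop]; omega) :=
        List.getElem_append_right (by omega)
      have e3 : (LS.take a ++ (LA.map f ++ LS.drop a))[j + m + a - m]'(by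
            simp only [List.length_append, htake, hmap, hdrop]; omega)
          = (LA.map f ++ LS.drop a)[j + m + a - m - a]'(by
            simp only [List.length_append, hmap, hdrop]; omega) :=
        (List.getElem_append_right (by omega)).trans (hidx _ _ _ _ (by rw [htake]))
      have e4 : (LA.map f ++ LS.drop a)[j + m + a - m - a]'(by
            simp only [List.length_append, hmap, hdrop]; omega)
          = (LA.map f)[j]'(by omega) := by
        rw [hidx _ _ j _ (by omega)]
        exact List.getElem_append_left (by omega)
      rw [e1, e2, e3, e4, List.getElem_map]
    · refine ⟨fun _ => rfl, ?_, ?_, ?_⟩ <;> omega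
  rcases Nat.lt_or_ge j (m + a) with h2 | h2
  · -- take-singles block
    refine ⟨j, by omega, ?_, ?_⟩
    · have e1 : (LA ++ (LS.take a ++ (LA.map f ++ LS.drop a)))[j]
          = (LS.take a ++ (LA.map f ++ LS.drop a))[j - m]'(by
            simp only [List.length_append, htake, hmap, hdrop]; omega) :=
        List.getElem_append_right h1
      have e2 : (LS.take a ++ (LA.map f ++ LS.drop a))[j - m]'(by
            simp only [List.length_append, htake, hmap, hdrop]; omega)
          = (LS.take a)[j - m]'(by omega) :=
        List.getElem_append_left (by omega)
      have hmem : (LA ++ (LS.take a ++ (LA.map f ++ LS.drop a)))[j] ∈ LS := by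
        rw [e1, e2]
        exact (List.take_sublist _ _).mem (List.getElem_mem _)
      rw [hS _ hmem]
    · refine ⟨?_, fun _ _ => rfl, ?_, ?_⟩ <;> omega
  rcases Nat.lt_or_ge j (2*m + a) with h3 | h3
  · -- second-of-pairs block
    refine ⟨j - (m + a), by omega, ?_, ?_⟩
    · have e1 : (LA ++ (LS.take a ++ (LA.map f ++ LS.drop a)))[j]
          = (LS.take a ++ (LA.map f ++ LS.drop a))[j - m]'(by
            simp only [List.length_append, htake, hmap, hdrop]; omega) :=
        List.getElem_append_right h1
      have e2 : (LS.take a ++ (LA.map f ++ LS.drop a))[j - m]'(by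
            simp only [List.length_append, htake, hmap, hdrop]; omega)
          = (LA.map f ++ LS.drop a)[j - m - a]'(by
            simp only [List.length_append, hmap, hdrop]; omega) :=
        (List.getElem_append_right (by omega)).trans (hidx _ _ _ _ (by rw [htake]))
      have e3 : (LA.map f ++ LS.drop a)[j - m - a]'(by
            simp only [List.length_append, hmap, hdrop]; omega)
          = (LA.map f)[j - m - a]'(by omega) :=
        List.getElem_append_left (by omega)
      have e4 : (LA ++ (LS.take a ++ (LA.map f ++ LS.drop a)))[j - (m+a)]'(by omega)
          = LA[j - (m+a)]'(by omega) :=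
        List.getElem_append_left (by omega)
      rw [e1, e2, e3, List.getElem_map, hf, e4, hidx _ _ (j - (m+a)) _ (by omega)]
    · refine ⟨?_, ?_, fun _ _ => rfl, ?_⟩ <;> omega
  · -- drop-singles block
    refine ⟨j, by omega, ?_, ?_⟩
    · have e1 : (LA ++ (LS.take a ++ (LA.map f ++ LS.drop a)))[j]
          = (LS.take a ++ (LA.map f ++ LS.drop a))[j - m]'(by
            simp only [List.length_append, htake, hmap, hdrop]; omega) :=
        List.getElem_append_right (by omega)
      have e2 : (LS.take a ++ (LA.map f ++ LS.drop a))[j - m]'(by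
            simp only [List.length_append, htake, hmap, hdrop]; omega)
          = (LA.map f ++ LS.drop a)[j - m - a]'(by
            simp only [List.length_append, hmap, hdrop]; omega) :=
        (List.getElem_append_right (by omega)).trans (hidx _ _ _ _ (by rw [htake]))
      have e3 : (LA.map f ++ LS.drop a)[j - m - a]'(by
            simp only [List.length_append, hmap, hdrop]; omega)
          = (LS.drop a)[j - m - a - m]'(by omega) :=
        (List.getElem_append_right (by omega)).trans (hidx _ _ _ _ (by rw [hmap]))
      have hmem : (LA ++ (LS.take a ++ (LA.map f ++ LS.drop a)))[j] ∈ LS := by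
        rw [e1, e2, e3]
        exact (List.drop_sublist _ _).mem (List.getElem_mem _)
      rw [hS _ hmem]
    · refine ⟨?_, ?_, ?_, fun _ => rfl⟩ <;> omega

open Finset in
theorem key (n : ℕ) (hn : 5 ≤ n) (f : Fin n → Fin n) (hf : Function.Involutive f)
    (h6 : (∃ v, f v ≠ v) → 6 ≤ n) :
    ∃ g : Fin n ≃ Fin n, ∀ i : Fin n,
      ((g.symm (f (g i))) : ℕ) ≠ ((i : ℕ) + 1) % n ∧
      ((g.symm (f (g i))) : ℕ) ≠ ((i : ℕ) + 2) % n := by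
  classical
  set A : Finset (Fin n) := univ.filter (fun v => v < f v) with hA
  set B : Finset (Fin n) := univ.filter (fun v => f v < v) with hB
  set S : Finset (Fin n) := univ.filter (fun v => f v = v) with hS
  set m := A.card with hm
  set u := S.card with hu
  set a := u / 2 with ha
  have hBA : B = A.image f := by
    ext v
    simp only [hB, hA, Finset.mem_filter, Finset.mem_univ, true_and, Finset.mem_image]
    constructor
    · intro h
      exact ⟨f v, by simpa [hf v] using h, hf v⟩
    · rintro ⟨w, hw, rfl⟩
      simpa [hf w] using hw
  have hBcard : B.card = m := by
    rw [hBA, Finset.card_image_of_injective _ hf.injective]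
  have hn2 : n = 2 * m + u := by
    have h1 : (univ.filter (fun v : Fin n => f v = v)).card
        + (univ.filter (fun v : Fin n => ¬ f v = v)).card = n := by
      rw [Finset.card_filter_add_card_filter_not]
      simp
    have h2 : univ.filter (fun v : Fin n => ¬ f v = v) = A ∪ B := by
      ext v
      simp only [Finset.mem_filter, Finset.mem_univ, true_and, Finset.mem_union, hA, hB]
      constructor
      · intro h; exact (lt_or_gt_of_ne (fun he => h he.symm)).imp id id
      · rintro (h | h) <;> simp_all <;> omega
    have h3 : Disjoint A B := by
      rw [hA, hB, Finset.disjoint_filter]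
      intro x _ hx1 hx2
      exact absurd (hx1.trans hx2) (lt_irrefl x)
    have h4 := Finset.card_union_of_disjoint h3
    rw [h2, ← hS, h4] at h1
    omega
  have hau : a ≤ u := Nat.div_le_self _ _
  have hma : m = 0 ∨ (3 ≤ m + a ∧ 3 ≤ m + (u - a)) := by
    by_cases hm0 : m = 0
    · exact Or.inl hm0
    · right
      obtain ⟨v, hv⟩ := Finset.card_pos.mp (Nat.pos_of_ne_zero hm0)
      rw [hA, Finset.mem_filter] at hv
      have h6' := h6 ⟨v, by have := hv.2; omega⟩
      omega
  set LA := A.sort (· ≤ ·) with hLA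
  set LS := S.sort (· ≤ ·) with hLS
  have hlena : LA.length = m := Finset.length_sort _
  have hlens : LS.length = u := Finset.length_sort _
  set L : List (Fin n) := LA ++ (LS.take a ++ (LA.map f ++ LS.drop a)) with hL
  have hmemA : ∀ v ∈ LA, v < f v := by
    intro v hv; have := (Finset.mem_sort _).1 hv; rw [hA] at this
    simpa using this
  have hmemB : ∀ v ∈ LA.map f, f v < v := by
    intro v hv
    obtain ⟨w, hw, rfl⟩ := List.mem_map.1 hv
    have := hmemA w hw; rwa [hf w]
  have hmemS : ∀ v ∈ LS, f v = v := by
    intro v hv; have := (Finset.mem_sort _).1 hv; rw [hS] at this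
    simpa using this
  have hnodup : L.Nodup := by
    rw [hL]
    rw [List.nodup_append, List.nodup_append, List.nodup_append]
    refine ⟨Finset.sort_nodup _ _, ⟨(Finset.sort_nodup _ _).sublist (List.take_sublist _ _),
      ⟨((Finset.sort_nodup _ _).map hf.injective),
        (Finset.sort_nodup _ _).sublist (List.drop_sublist _ _), ?_⟩, ?_⟩, ?_⟩
    · intro v hv w hv' hvw; subst hvw
      have h1 := hmemB v hv
      have h2 := hmemS v ((List.drop_sublist _ _).mem hv')
      omega
    · intro v hv w hv' hvw; subst hvw
      have h2 := hmemS v ((List.take_sublist _ _).mem hv)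
      rcases List.mem_append.1 hv' with h | h
      · have := hmemB v h; omega
      · exact List.disjoint_take_drop (Finset.sort_nodup _ _) le_rfl hv h
    · intro v hv w hv' hvw; subst hvw
      have h1 := hmemA v hv
      rcases List.mem_append.1 hv' with h | h
      · have := hmemS v ((List.take_sublist _ _).mem h); omega
      rcases List.mem_append.1 h with h | h
      · have := hmemB v h; omega
      · have := hmemS v ((List.drop_sublist _ _).mem h); omega
  have hlenn : L.length = n := by
    simp only [hL, List.length_append, List.length_take, List.length_map,
      List.length_drop, hlena, hlens]
    omega
  set F : Fin n → Fin n :=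
    fun i => L[(i : ℕ)]'(lt_of_lt_of_le i.isLt (le_of_eq hlenn.symm)) with hF
  have hFinj : Function.Injective F := by
    intro i j hij
    have h2 : L.get ⟨(i:ℕ), by rw [hlenn]; exact i.isLt⟩
        = L.get ⟨(j:ℕ), by rw [hlenn]; exact j.isLt⟩ := by
      simpa [List.get_eq_getElem] using hij
    have h3 := List.nodup_iff_injective_get.mp hnodup h2
    have h4 := congrArg Fin.val h3
    exact Fin.ext h4
  have hFbij : Function.Bijective F := Finite.injective_iff_bijective.mp hFinj
  set g : Fin n ≃ Fin n := Equiv.ofBijective F hFbij with hg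
  refine ⟨g, fun i => ?_⟩
  -- apply key_aux
  obtain ⟨p, hp, hfp, c1, c2, c3, c4⟩ := key_aux f hf LA LS a (by omega) hmemS (i : ℕ)
    (by rw [← hL, hlenn]; exact i.isLt)
  have hp' : p < n := by rw [← hlenn]; exact hp
  have hsymm : g.symm (f (g i)) = ⟨p, hp'⟩ := by
    rw [Equiv.symm_apply_eq]
    show f (F i) = F ⟨p, hp'⟩
    exact hfp
  rw [hsymm]
  simp only []
  show p ≠ ((i : ℕ) + 1) % n ∧ p ≠ ((i : ℕ) + 2) % n
  have hj : (i : ℕ) < n := i.isLt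
  have hmod1 : ((i:ℕ)+1) % n = (i:ℕ)+1 ∨ ((i:ℕ)+1 = n ∧ ((i:ℕ)+1) % n = 0) := by
    rcases Nat.lt_or_ge ((i:ℕ)+1) n with h | h
    · exact Or.inl (Nat.mod_eq_of_lt h)
    · exact Or.inr ⟨by omega, by rw [show (i:ℕ)+1 = n by omega, Nat.mod_self]⟩
  have hmod2 : ((i:ℕ)+2) % n = (i:ℕ)+2 ∨ (((i:ℕ)+2 = n ∧ ((i:ℕ)+2) % n = 0))
      ∨ (((i:ℕ)+2 = n + 1 ∧ ((i:ℕ)+2) % n = 1)) := by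
    rcases Nat.lt_or_ge ((i:ℕ)+2) n with h | h
    · exact Or.inl (Nat.mod_eq_of_lt h)
    rcases Nat.lt_or_ge ((i:ℕ)+2) (n+1) with h' | h'
    · exact Or.inr (Or.inl ⟨by omega, by rw [show (i:ℕ)+2 = n by omega, Nat.mod_self]⟩)
    · refine Or.inr (Or.inr ⟨by omega, ?_⟩)
      rw [show (i:ℕ)+2 = 1 + n by omega, Nat.add_mod_right]
      exact Nat.mod_eq_of_lt (by omega)
  rw [hlena] at c1 c2 c3 c4
  rcases Nat.lt_or_ge (i:ℕ) m with hc | hc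
  · have := c1 hc
    rcases hma with hx|hx <;> rcases hmod1 with h1|h1 <;> rcases hmod2 with h2|h2|h2 <;> omega
  rcases Nat.lt_or_ge (i:ℕ) (m + a) with hc' | hc'
  · have := c2 hc hc'
    rcases hma with hx|hx <;> rcases hmod1 with h1|h1 <;> rcases hmod2 with h2|h2|h2 <;> omega
  rcases Nat.lt_or_ge (i:ℕ) (2*m + a) with hc'' | hc''
  · have := c3 hc' hc''
    rcases hma with hx|hx <;> rcases hmod1 with h1|h1 <;> rcases hmod2 with h2|h2|h2 <;> omega
  · have := c4 hc''
    rcases hma with hx|hx <;> rcases hmod1 with h1|h1 <;> rcases hmod2 with h2|h2|h2 <;> omega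

/-- A 4-connected complete multipartite graph with all parts of size at most 2
(a complete graph minus a matching) contains the square of a Hamiltonian cycle. -/
theorem completeMinusMatching_h2 {V : Type*} [Fintype V] (G : SimpleGraph V)
    (hcm : IsCompleteMultipartite G)
    (hparts : ∀ v : V, ({w : V | ¬G.Adj v w}).ncard ≤ 2)
    (h4 : 4 < Fintype.card V ∧
      ∀ S : Finset V, S.card < 4 → (G.induce ((S : Set V)ᶜ)).Connected) :
    HasH2 G := by
  classical
  obtain ⟨hn4, hconn⟩ := h4
  set n := Fintype.card V with hn
  have hn5 : 5 ≤ n := hn4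
  haveI : NeZero n := ⟨by omega⟩
  haveI : Fact (1 < n) := ⟨by omega⟩
  set f0 : V → V := fun v => if h : ∃ w, w ≠ v ∧ ¬ G.Adj v w then h.choose else v with hf0
  have hne : ∀ v, ¬ G.Adj v (f0 v) := by
    intro v
    simp only [hf0]
    split_ifs with h
    · exact h.choose_spec.2
    · exact G.irrefl
  have hchne : ∀ v, f0 v ≠ v ∨ f0 v = v := fun v => ne_or_eq _ _
  have huniq : ∀ v w, w ≠ v → ¬ G.Adj v w → w = f0 v := by
    intro v w hwv hadj
    have h : ∃ w, w ≠ v ∧ ¬ G.Adj v w := ⟨w, hwv, hadj⟩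
    simp only [hf0]
    rw [dif_pos h]
    by_contra hne2
    have hcv := h.choose_spec
    have hsub : ({v, w, h.choose} : Set V) ⊆ {x | ¬ G.Adj v x} := by
      intro x hx
      rcases hx with rfl | rfl | rfl
      · exact G.irrefl
      · exact hadj
      · exact hcv.2
    have hcard : ({v, w, h.choose} : Set V).ncard = 3 := by
      rw [Set.ncard_insert_of_notMem (by simp [Ne.symm hwv, (Ne.symm hcv.1)]),
        Set.ncard_pair hne2]
    have hle := Set.ncard_le_ncard hsub (Set.toFinite _)
    have := hparts v
    omega
  have hinv : Function.Involutive f0 := by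
    intro v
    by_cases h : f0 v = v
    · rw [h]; exact h
    · have h1 : ¬ G.Adj (f0 v) v := fun ha => hne v ha.symm
      exact (huniq (f0 v) v (Ne.symm h) h1).symm
  have hadj : ∀ v w, v ≠ w → w ≠ f0 v → G.Adj v w := by
    intro v w h1 h2
    by_contra h3
    exact h2 (huniq v w (Ne.symm h1) h3)
  set q : V ≃ Fin n := Fintype.equivFin V with hq
  set f : Fin n → Fin n := fun i => q (f0 (q.symm i)) with hfdef
  have hfinv : Function.Involutive f := by
    intro i
    simp [hfdef, hinv (q.symm i)]
  have h6 : (∃ i, f i ≠ i) → 6 ≤ n := by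
    rintro ⟨i, hi⟩
    set v := q.symm i with hv
    have hvne : f0 v ≠ v := by
      intro he
      apply hi
      simp only [hfdef, ← hv, he]
      rw [hv]
      exact q.apply_symm_apply i
    by_contra h6'
    set T : Finset V := ({v, f0 v} : Finset V)ᶜ with hT
    have hTcard : T.card < 4 := by
      rw [hT, Finset.card_compl]
      have h2 : ({v, f0 v} : Finset V).card = 2 := by
        rw [Finset.card_insert_of_notMem (by simp [Ne.symm hvne]), Finset.card_singleton]
      rw [h2]
      omega
    have hc := hconn T hTcard
    rw [hT, Finset.coe_compl, compl_compl] at hc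
    have hbot : G.induce ((({v, f0 v} : Finset V) : Set V)) = ⊥ := by
      ext x y
      simp only [SimpleGraph.comap_adj, Function.Embedding.coe_subtype,
        SimpleGraph.bot_adj, iff_false]
      have hx := x.2
      have hy := y.2
      simp only [Finset.coe_insert, Finset.coe_singleton, Set.mem_insert_iff,
        Set.mem_singleton_iff] at hx hy
      rcases hx with hx | hx <;> rcases hy with hy | hy <;> rw [hx, hy]
      · exact G.irrefl
      · exact hne v
      · exact fun ha => hne v ha.symm
      · exact G.irrefl
    rw [hbot] at hc
    have h1 : v ∈ ((({v, f0 v} : Finset V) : Set V)) := by simp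
    have h2 : f0 v ∈ ((({v, f0 v} : Finset V) : Set V)) := by simp
    have hr := hc.preconnected ⟨v, h1⟩ ⟨f0 v, h2⟩
    rw [SimpleGraph.reachable_bot] at hr
    exact hvne (congrArg Subtype.val hr).symm
  obtain ⟨g, hg⟩ := key n hn5 f hfinv h6
  set zEquiv : ZMod n ≃ Fin n :=
    ⟨fun x => ⟨x.val, ZMod.val_lt x⟩, fun i => ((i : ℕ) : ZMod n),
      fun x => ZMod.natCast_rightInverse x,
      fun i => Fin.ext (ZMod.val_cast_of_lt i.isLt)⟩ with hz
  set e : ZMod n ≃ V := zEquiv.trans (g.trans q.symm) with he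
  have hval : ∀ j : ZMod n, ((zEquiv j : Fin n) : ℕ) = j.val := fun j => rfl
  have hv1 : ∀ i : ZMod n, (i + 1 : ZMod n).val = (i.val + 1) % n := by
    intro i; rw [ZMod.val_add, ZMod.val_one]
  have hv2 : ∀ i : ZMod n, (i + 2 : ZMod n).val = (i.val + 2) % n := by
    intro i
    rw [ZMod.val_add]
    congr 1
    have h2 : ((2 : ℕ) : ZMod n) = (2 : ZMod n) := by norm_cast
    rw [← h2, ZMod.val_cast_of_lt (by omega)]
  have hestep : ∀ j : ZMod n, e j = q.symm (g (zEquiv j)) := fun j => rfl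
  have hf0e : ∀ j : ZMod n, f0 (e j) = q.symm (f (g (zEquiv j))) := by
    intro j
    rw [hestep, hfdef]
    simp
  have hone : (1 : ZMod n) ≠ 0 := by
    intro h
    have h' := congrArg ZMod.val h
    rw [ZMod.val_one, ZMod.val_zero] at h'
    exact one_ne_zero h'
  have htwo : (2 : ZMod n) ≠ 0 := by
    intro h
    have h2' : ((2 : ℕ) : ZMod n) = 0 := by norm_cast
    rw [ZMod.natCast_eq_zero_iff] at h2'
    have := Nat.le_of_dvd (by norm_num) h2'
    omega
  have hmain : ∀ (i j : ZMod n), j ≠ i →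
      (j.val = (i.val + 1) % n ∨ j.val = (i.val + 2) % n) →
      G.Adj (e i) (e j) := by
    intro i j hne0 hj
    apply hadj
    · intro heq
      exact hne0 (e.injective heq).symm
    · intro heq
      have h1 : q.symm (g (zEquiv j)) = q.symm (f (g (zEquiv i))) := by
        rw [← hestep, ← hf0e]; exact heq
      have h2 : zEquiv j = g.symm (f (g (zEquiv i))) := by
        rw [Equiv.eq_symm_apply]
        exact q.symm.injective h1
      have h3 := congrArg Fin.val h2
      rw [hval] at h3
      have h4 := (hg (zEquiv i)).1
      have h5 := (hg (zEquiv i)).2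
      rw [hval] at h4 h5
      rcases hj with hj | hj
      · exact h4 (h3 ▸ hj.symm ▸ rfl)
      · exact h5 (h3 ▸ hj.symm ▸ rfl)
  show ∃ e : ZMod n ≃ V, ∀ i : ZMod n, G.Adj (e i) (e (i + 1)) ∧ G.Adj (e i) (e (i + 2))
  refine ⟨e, fun i => ⟨?_, ?_⟩⟩
  · refine hmain i (i+1) ?_ (Or.inl (hv1 i))
    intro h'
    apply hone
    have := congrArg (fun x => x - i) h'
    simpa using this
  · refine hmain i (i+2) ?_ (Or.inr (hv2 i))
    intro h'
    apply htwo
    have := congrArg (fun x => x - i) h'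
    simpa using this
end
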